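/- arXiv:2112.11970 — 3 statements merged into one kernel-verified Lean document; each statement's English description precedes it below -/
import Mathlib

section
/- Let G be a Type A subdivision of K_5, and let H be the induced subgraph of G consisting of the 4-cycle abcd of non-subdivided edges together with the vertex e and the four vertices adjacent to a, b, c, d on the subdivided paths to e. Then H has no star cutset, H has no vertex of degree at most 1, and H contains no vertex lying on every cycle of H. -/
namespace BurlingFormal

open SimpleGraph

/-- An orientation of a simple graph, given as a relation choosing a direction for each edge. -/
def IsOrientation {V : Type} (G : SimpleGraph V) (A : V → V → Prop) : Prop :=
  (∀ u v, A u v → G.Adj u v) ∧ (∀ u v, G.Adj u v → (A u v ↔ ¬ A v u))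

/-- A chordless cycle: a cycle such that every adjacency between its vertices is a cycle edge. -/
def IsChordlessCycle {V : Type} (G : SimpleGraph V) {v : V} (c : G.Walk v v) : Prop :=
  c.IsCycle ∧ ∀ x y, x ∈ c.support → y ∈ c.support → G.Adj x y → s(x, y) ∈ c.edges

/-- A hole: a chordless cycle of length at least 4. -/
def IsHole {V : Type} (G : SimpleGraph V) {v : V} (c : G.Walk v v) : Prop :=
  IsChordlessCycle G c ∧ 4 ≤ c.length

/-- A source of a hole w.r.t. an orientation: both its neighbours on the hole are out-neighbours. -/
def IsHoleSource {V : Type} {G : SimpleGraph V} {v : V} (A : V → V → Prop)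
    (c : G.Walk v v) (x : V) : Prop :=
  x ∈ c.support ∧ ∀ y, s(x, y) ∈ c.edges → A x y

/-- A sink of a hole w.r.t. an orientation: both its neighbours on the hole are in-neighbours. -/
def IsHoleSink {V : Type} {G : SimpleGraph V} {v : V} (A : V → V → Prop)
    (c : G.Walk v v) (x : V) : Prop :=
  x ∈ c.support ∧ ∀ y, s(x, y) ∈ c.edges → A y x

/-- An extremum of a hole: a source or a sink of it. -/
def IsHoleExtremum {V : Type} {G : SimpleGraph V} {v : V} (A : V → V → Prop)
    (c : G.Walk v v) (x : V) : Prop :=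
  IsHoleSource A c x ∨ IsHoleSink A c x

/-- The hole has exactly two sources and exactly two sinks. -/
def TwoSourcesTwoSinks {V : Type} {G : SimpleGraph V} {v : V} (A : V → V → Prop)
    (c : G.Walk v v) : Prop :=
  (∃ s₁ s₂, s₁ ≠ s₂ ∧ IsHoleSource A c s₁ ∧ IsHoleSource A c s₂ ∧
    ∀ s, IsHoleSource A c s → s = s₁ ∨ s = s₂) ∧
  (∃ t₁ t₂, t₁ ≠ t₂ ∧ IsHoleSink A c t₁ ∧ IsHoleSink A c t₂ ∧
    ∀ t, IsHoleSink A c t → t = t₁ ∨ t = t₂)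

/-- The pivot of a hole: a sink adjacent on the hole to all of its sources. -/
def IsHolePivot {V : Type} {G : SimpleGraph V} {v : V} (A : V → V → Prop)
    (c : G.Walk v v) (x : V) : Prop :=
  IsHoleSink A c x ∧ ∀ y, IsHoleSource A c y → s(x, y) ∈ c.edges

/-- A subordinate vertex of a hole: neither an antenna (source) nor the pivot. -/
def IsHoleSubordinate {V : Type} {G : SimpleGraph V} {v : V} (A : V → V → Prop)
    (c : G.Walk v v) (x : V) : Prop :=
  x ∈ c.support ∧ ¬ IsHoleSource A c x ∧ ¬ IsHolePivot A c x

/-- `S` is the vertex set of a (possibly empty) branch (downward path) starting at `u`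
in the rooted tree given by the parent function. -/
def IsBranchFrom {V : Type} (parent : V → V) (u : V) (S : Set V) : Prop :=
  S = ∅ ∨ (u ∈ S ∧ (∀ w ∈ S, w ≠ u → parent w ∈ S ∧ parent w ≠ w) ∧
    ∀ w ∈ S, ∀ w' ∈ S, w ≠ u → w' ≠ u → parent w = parent w' → w = w')

/-- A Burling tree: a rooted tree (given by a parent function) together with a last-born
function and a choose function assigning to each non-last-born non-root vertex the vertex set
of a branch starting at the last-born of its parent. -/
structure BurlingTree (V : Type) where
  parent : V → V
  root : V
  parent_root : parent root = root
  reach : ∀ v, ∃ n, parent^[n] v = root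
  lastBorn : V → V
  lastBorn_child : ∀ v, (∃ u, u ≠ v ∧ parent u = v) → parent (lastBorn v) = v ∧ lastBorn v ≠ v
  choosePath : V → Set V
  choosePath_empty : ∀ v, v = root ∨ v = lastBorn (parent v) → choosePath v = ∅
  choosePath_branch : ∀ v, v ≠ root → v ≠ lastBorn (parent v) →
    IsBranchFrom parent (lastBorn (parent v)) (choosePath v)

/-- The arcs of the oriented graph fully derived from a Burling tree. -/
def BurlingTree.Arc {V : Type} (T : BurlingTree V) (u v : V) : Prop :=
  v ∈ T.choosePath u

/-- `A` orients `G` so that `G` with this orientation is an oriented graph derived from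
some Burling tree (an oriented Burling graph). -/
def IsOrientedBurling {W : Type} (G : SimpleGraph W) (A : W → W → Prop) : Prop :=
  IsOrientation G A ∧
    ∃ (V : Type) (T : BurlingTree V) (f : W ↪ V), ∀ u v, A u v ↔ T.Arc (f u) (f v)

/-- A Burling graph (equivalently, a derived graph): the underlying graph of an oriented
graph derived from a Burling tree. -/
def IsBurlingGraph {W : Type} (G : SimpleGraph W) : Prop :=
  ∃ A, IsOrientedBurling G A

/-- A global subordinate vertex of a Burling graph: subordinate in some hole, for every
orientation of the graph as an oriented Burling graph. -/
def IsGlobalSubordinate {W : Type} (G : SimpleGraph W) (x : W) : Prop :=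
  ∀ A, IsOrientedBurling G A →
    ∃ (v : W) (c : G.Walk v v), IsHole G c ∧ IsHoleSubordinate A c x

/-- `H` is a subdivision of `G` via the branch-vertex embedding `f` and the system of
paths `P` replacing the edges of `G`. -/
def IsSubdivisionVia {V W : Type} (H : SimpleGraph W) (G : SimpleGraph V) (f : V ↪ W)
    (P : ∀ ⦃u v : V⦄, G.Adj u v → H.Walk (f u) (f v)) : Prop :=
  (∀ ⦃u v⦄ (h : G.Adj u v), (P h).IsPath ∧ 1 ≤ (P h).length) ∧
  (∀ ⦃u v⦄ (h : G.Adj u v) (x : V), f x ∈ (P h).support → x = u ∨ x = v) ∧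
  (∀ ⦃u v u' v'⦄ (h : G.Adj u v) (h' : G.Adj u' v'), s(u, v) ≠ s(u', v') →
    ∀ w, w ∈ (P h).support → w ∈ (P h').support → ∃ x : V, w = f x) ∧
  (∀ w : W, ∃ u v, ∃ h : G.Adj u v, w ∈ (P h).support) ∧
  (∀ ⦃x y : W⦄, H.Adj x y → ∃ u v, ∃ h : G.Adj u v, s(x, y) ∈ (P h).edges)

/-- `H` is a subdivision of `G`. -/
def IsSubdivision {V W : Type} (H : SimpleGraph W) (G : SimpleGraph V) : Prop :=
  ∃ (f : V ↪ W) (P : ∀ ⦃u v : V⦄, G.Adj u v → H.Walk (f u) (f v)), IsSubdivisionVia H G f P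

/-- `G` contains an induced copy of `H`. -/
def InducedCopy {V W : Type} (H : SimpleGraph W) (G : SimpleGraph V) : Prop :=
  ∃ f : W ↪ V, ∀ a b, H.Adj a b ↔ G.Adj (f a) (f b)

/-- The clique number of a graph. -/
noncomputable def cliqueNumber {V : Type} (G : SimpleGraph V) : ℕ :=
  sSup {n | ∃ s : Finset V, G.IsNClique n s}

/-- `G` belongs to `Forb*(H)`: it has no induced subdivision of `H`. -/
def InForbs {VH V : Type} (H : SimpleGraph VH) (G : SimpleGraph V) : Prop :=
  ∀ (U : Type) (S : SimpleGraph U), IsSubdivision S H → ¬ InducedCopy S G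

/-- `H` is weakly pervasive: the class `Forb*(H)` (of finite graphs) is χ-bounded. -/
def WeaklyPervasive {VH : Type} (H : SimpleGraph VH) : Prop :=
  ∃ f : ℕ → ℕ, ∀ (V : Type) (_ : Fintype V) (G : SimpleGraph V),
    InForbs H G → G.chromaticNumber ≤ (f (cliqueNumber G) : ℕ∞)

/-- `G` has a star cutset centered at `v`. -/
def HasStarCutsetAt {V : Type} (G : SimpleGraph V) (v : V) : Prop :=
  ∃ S : Set V, v ∈ S ∧ (∀ u ∈ S, u = v ∨ G.Adj v u) ∧ ¬ (G.induce Sᶜ).Preconnected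

/-- `G` has a star cutset. -/
def HasStarCutset {V : Type} (G : SimpleGraph V) : Prop :=
  ∃ v, HasStarCutsetAt G v

/-- The structure of an `m`-necklace on the graph `G`: beads `B i` (chordless cycles of
length at least 4 through the non-adjacent vertices `a i`, `b i`) joined cyclically by
paths `P i` from `b i` to `a (i+1)` (of length possibly 0, i.e. identification),
with no further vertices or edges. -/
structure Necklace {V : Type} (G : SimpleGraph V) (m : ℕ) where
  a : ZMod m → V
  b : ZMod m → V
  B : ∀ i, G.Walk (a i) (a i)
  P : ∀ i, G.Walk (b i) (a (i + 1))
  B_cycle : ∀ i, (B i).IsCycle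
  B_len : ∀ i, 4 ≤ (B i).length
  b_mem : ∀ i, b i ∈ (B i).support
  ab_ne : ∀ i, a i ≠ b i
  ab_nonadj : ∀ i, ¬ G.Adj (a i) (b i)
  P_path : ∀ i, (P i).IsPath
  bead_disjoint : ∀ i j, i ≠ j → ∀ x, x ∈ (B i).support → x ∈ (B j).support →
    (j = i + 1 ∧ x = b i ∧ x = a j) ∨ (i = j + 1 ∧ x = b j ∧ x = a i)
  path_bead_disjoint : ∀ i j (x : V), x ∈ (P i).support → x ∈ (B j).support →
    x = b i ∨ x = a (i + 1)
  path_disjoint : ∀ i j, i ≠ j → ∀ x, x ∈ (P i).support → x ∈ (P j).support →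
    (x = b i ∨ x = a (i + 1)) ∧ (x = b j ∨ x = a (j + 1))
  cover_vertex : ∀ x : V, (∃ i, x ∈ (B i).support) ∨ ∃ i, x ∈ (P i).support
  cover_edge : ∀ x y, G.Adj x y → (∃ i, s(x, y) ∈ (B i).edges) ∨ ∃ i, s(x, y) ∈ (P i).edges

/-- The bead `B i` of a necklace is short if `a i` and `b i` have a common neighbour. -/
def Necklace.Short {V : Type} {G : SimpleGraph V} {m : ℕ} (N : Necklace G m)
    (i : ZMod m) : Prop :=
  ∃ w, G.Adj (N.a i) w ∧ G.Adj (N.b i) w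

/-- A chandelier: an in-tree (given by a parent function on `V \ {hub}`) with at least two
leaves, together with an extra vertex `hub` joined to all the leaves. -/
structure Chandelier (V : Type) where
  hub : V
  root : V
  parent : V → V
  hub_ne_root : hub ≠ root
  parent_root : parent root = root
  parent_hub : parent hub = hub
  parent_ne_hub : ∀ u, u ≠ hub → parent u ≠ hub
  reach : ∀ u, u ≠ hub → ∃ n, parent^[n] u = root
  two_leaves : ∃ l₁ l₂ : V, l₁ ≠ l₂ ∧
    (l₁ ≠ hub ∧ l₁ ≠ root ∧ ∀ w, parent w = l₁ → w = l₁) ∧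
    (l₂ ≠ hub ∧ l₂ ≠ root ∧ ∀ w, parent w = l₂ → w = l₂)

/-- A leaf of the in-tree of a chandelier. -/
def Chandelier.IsLeaf {V : Type} (C : Chandelier V) (u : V) : Prop :=
  u ≠ C.hub ∧ u ≠ C.root ∧ ∀ w, C.parent w = u → w = u

/-- The arcs of (the oriented version of) a chandelier. -/
def Chandelier.Arc {V : Type} (C : Chandelier V) (u w : V) : Prop :=
  (u ≠ C.hub ∧ u ≠ C.root ∧ w = C.parent u) ∨ (C.IsLeaf u ∧ w = C.hub)

/-- The underlying (non-oriented) graph of a chandelier. -/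
def Chandelier.graph {V : Type} (C : Chandelier V) : SimpleGraph V :=
  SimpleGraph.fromRel C.Arc

/-- There is a vertex lying on every cycle of the graph. -/
def HasUniversalCycleVertex {V : Type} (G : SimpleGraph V) : Prop :=
  ∃ x : V, ∀ (w : V) (c : G.Walk w w), c.IsCycle → x ∈ c.support

/-- A Burling-admissible type-4 subdivision of `K₄` sitting inside `G`: branch vertices
`x, y, z, w`, where the two non-subdivided edges `xy`, `xz` share the endpoint `x`, and the
four other edges are replaced by internally disjoint paths of length at least 2. -/
structure Type4K4Core {V : Type} (G : SimpleGraph V) where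
  x : V
  y : V
  z : V
  w : V
  ne_xy : x ≠ y
  ne_xz : x ≠ z
  ne_xw : x ≠ w
  ne_yz : y ≠ z
  ne_yw : y ≠ w
  ne_zw : z ≠ w
  adj_xy : G.Adj x y
  adj_xz : G.Adj x z
  Pxw : G.Walk x w
  Pyz : G.Walk y z
  Pyw : G.Walk y w
  Pzw : G.Walk z w
  Pxw_path : Pxw.IsPath
  Pyz_path : Pyz.IsPath
  Pyw_path : Pyw.IsPath
  Pzw_path : Pzw.IsPath
  Pxw_len : 2 ≤ Pxw.length
  Pyz_len : 2 ≤ Pyz.length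
  Pyw_len : 2 ≤ Pyw.length
  Pzw_len : 2 ≤ Pzw.length
  d₁ : ∀ v, v ∈ Pxw.support → v ∈ Pyz.support → False
  d₂ : ∀ v, v ∈ Pxw.support → v ∈ Pyw.support → v = w
  d₃ : ∀ v, v ∈ Pxw.support → v ∈ Pzw.support → v = w
  d₄ : ∀ v, v ∈ Pyz.support → v ∈ Pyw.support → v = y
  d₅ : ∀ v, v ∈ Pyz.support → v ∈ Pzw.support → v = z
  d₆ : ∀ v, v ∈ Pyw.support → v ∈ Pzw.support → v = w

/-- The vertex set of a type-4 `K₄`-subdivision configuration. -/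
def Type4K4Core.supp {V : Type} {G : SimpleGraph V} (c : Type4K4Core G) : Set V :=
  {v | v ∈ c.Pxw.support ∨ v ∈ c.Pyz.support ∨ v ∈ c.Pyw.support ∨ v ∈ c.Pzw.support}

/-- The edge set of a type-4 `K₄`-subdivision configuration. -/
def Type4K4Core.edges {V : Type} {G : SimpleGraph V} (c : Type4K4Core G) : Set (Sym2 V) :=
  {e | e ∈ c.Pxw.edges ∨ e ∈ c.Pyz.edges ∨ e ∈ c.Pyw.edges ∨ e ∈ c.Pzw.edges ∨
    e = s(c.x, c.y) ∨ e = s(c.x, c.z)}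

/-- The configuration exhausts the whole graph `G`. -/
def Type4K4Core.Spanning {V : Type} {G : SimpleGraph V} (c : Type4K4Core G) : Prop :=
  (∀ v : V, v ∈ c.supp) ∧ ∀ u v, G.Adj u v → s(u, v) ∈ c.edges

/-- A vertex of degree exactly 2. -/
def DegTwo {V : Type} (G : SimpleGraph V) (x : V) : Prop :=
  ∃ p q, p ≠ q ∧ G.Adj x p ∧ G.Adj x q ∧ ∀ r, G.Adj x r → r = p ∨ r = q


section TypeACoreDev
open Walk

variable {V : Type} {G : SimpleGraph V} {u v x y : V}

variable {V : Type} {G : SimpleGraph V} {u v x y : V}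

lemma getVert_mem_support (p : G.Walk u v) {i : ℕ} (hi : i ≤ p.length) :
    p.getVert i ∈ p.support :=
  mem_support_iff_exists_getVert.2 ⟨i, rfl, hi⟩

lemma IsPath.getVert_inj {p : G.Walk u v} (hp : p.IsPath) :
    ∀ {i j}, i ≤ p.length → j ≤ p.length → p.getVert i = p.getVert j → i = j := by
  induction p with
  | nil => intro i j hi hj _; simp at hi hj; omega
  | cons h q ih =>
    rw [Walk.cons_isPath_iff] at hp
    intro i j hi hj hij
    match i, j with
    | 0, 0 => rfl
    | 0, j+1 =>
      exfalso
      rw [Walk.getVert_zero, Walk.getVert_cons_succ] at hij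
      exact hp.2 (hij ▸ getVert_mem_support q (by simpa using hj))
    | i+1, 0 =>
      exfalso
      rw [Walk.getVert_zero, Walk.getVert_cons_succ] at hij
      exact hp.2 (hij ▸ getVert_mem_support q (by simpa using hi))
    | i+1, j+1 =>
      rw [Walk.getVert_cons_succ, Walk.getVert_cons_succ] at hij
      have := ih hp.1 (by simpa using hi) (by simpa using hj) hij
      omega

lemma exists_prefix_walk (p : G.Walk u v) {i : ℕ} (hi : i ≤ p.length) :
    ∃ q : G.Walk u (p.getVert i), ∀ z ∈ q.support, ∃ j, j ≤ i ∧ z = p.getVert j := by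
  induction i with
  | zero =>
    exact ⟨Walk.nil.copy rfl (p.getVert_zero).symm, by simp⟩
  | succ i ih =>
    obtain ⟨q, hq⟩ := ih (by omega)
    refine ⟨q.concat (p.adj_getVert_succ (by omega)), ?_⟩
    intro z hz
    rw [Walk.support_concat, List.mem_append] at hz
    rcases hz with hz | hz
    · obtain ⟨j, hj, hzj⟩ := hq z hz
      exact ⟨j, by omega, hzj⟩
    · simp at hz
      exact ⟨i + 1, le_refl _, hz⟩

lemma exists_suffix_walk (p : G.Walk u v) :
    ∀ (m i : ℕ), i + m = p.length → ∃ q : G.Walk (p.getVert i) v,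
      ∀ z ∈ q.support, ∃ j, i ≤ j ∧ j ≤ p.length ∧ z = p.getVert j := by
  intro m
  induction m with
  | zero =>
    intro i h
    refine ⟨Walk.nil.copy (by rw [show i = p.length by omega, p.getVert_length]) rfl, ?_⟩
    intro z hz
    simp at hz
    exact ⟨i, le_refl _, by omega, by rw [hz, show i = p.length by omega, p.getVert_length]⟩
  | succ m ih =>
    intro i h
    obtain ⟨q, hq⟩ := ih (i + 1) (by omega)
    refine ⟨Walk.cons (p.adj_getVert_succ (by omega)) q, ?_⟩
    intro z hz
    rw [Walk.support_cons, List.mem_cons] at hz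
    rcases hz with hz | hz
    · exact ⟨i, le_refl _, by omega, hz⟩
    · obtain ⟨j, hj1, hj2, hzj⟩ := hq z hz
      exact ⟨j, by omega, hj2, hzj⟩

lemma edge_index {p : G.Walk u v} (h : s(x, y) ∈ p.edges) :
    ∃ i, i < p.length ∧ ((x = p.getVert i ∧ y = p.getVert (i+1)) ∨
      (y = p.getVert i ∧ x = p.getVert (i+1))) := by
  induction p with
  | nil => simp at h
  | cons hadj q ih =>
    rw [Walk.edges_cons, List.mem_cons] at h
    rcases h with h | h
    · refine ⟨0, by simp, ?_⟩
      rw [Sym2.eq_iff] at h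
      rw [Walk.getVert_zero, Walk.getVert_cons_succ, Walk.getVert_zero]
      tauto
    · obtain ⟨i, hi, hcase⟩ := ih h
      refine ⟨i + 1, by simp; omega, ?_⟩
      rw [Walk.getVert_cons_succ, Walk.getVert_cons_succ]
      exact hcase

def Avoid (G : SimpleGraph V) (S : Set V) (x y : V) : Prop :=
  ∃ w : G.Walk x y, ∀ z ∈ w.support, z ∉ S

lemma Avoid.refl {S : Set V} (hx : x ∉ S) : Avoid G S x x :=
  ⟨Walk.nil, by simpa⟩

lemma Avoid.symm {S : Set V} (h : Avoid G S x y) : Avoid G S y x := by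
  obtain ⟨w, hw⟩ := h
  exact ⟨w.reverse, by simpa [Walk.support_reverse] using hw⟩

lemma Avoid.trans {z : V} {S : Set V} (h : Avoid G S x y) (h' : Avoid G S y z) :
    Avoid G S x z := by
  obtain ⟨w, hw⟩ := h
  obtain ⟨w', hw'⟩ := h'
  refine ⟨w.append w', ?_⟩
  intro a ha
  rw [Walk.mem_support_append_iff] at ha
  rcases ha with ha | ha
  · exact hw a ha
  · exact hw' a ha

lemma Avoid.of_adj {S : Set V} (h : G.Adj x y) (hx : x ∉ S) (hy : y ∉ S) :
    Avoid G S x y :=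
  ⟨Walk.cons h Walk.nil, by intro z hz; simp at hz; rcases hz with rfl | rfl <;> assumption⟩

lemma Avoid.mono {S S' : Set V} (hS : S' ⊆ S) (h : Avoid G S x y) : Avoid G S' x y := by
  obtain ⟨w, hw⟩ := h
  exact ⟨w, fun z hz hzS => hw z hz (hS hzS)⟩

lemma avoid_reachable {S : Set V} (w : G.Walk x y) (hw : ∀ z ∈ w.support, z ∉ S)
    (hx : x ∈ (Sᶜ : Set V)) (hy : y ∈ (Sᶜ : Set V)) :
    (G.induce Sᶜ).Reachable ⟨x, hx⟩ ⟨y, hy⟩ := by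
  induction w with
  | nil => rfl
  | @cons a b c h q ih =>
    have hb : b ∈ (Sᶜ : Set V) := hw b (by simp)
    have h1 : (G.induce Sᶜ).Adj ⟨a, hx⟩ ⟨b, hb⟩ := by simpa using h
    exact h1.reachable.trans (ih (fun z hz => hw z (by simp [hz])) hb hy)




structure Core (V : Type) (G : SimpleGraph V) where
  a : V
  b : V
  c : V
  d : V
  e : V
  ne_ab : a ≠ b
  ne_ac : a ≠ c
  ne_ad : a ≠ d
  ne_ae : a ≠ e
  ne_bc : b ≠ c
  ne_bd : b ≠ d
  ne_be : b ≠ e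
  ne_cd : c ≠ d
  ne_ce : c ≠ e
  ne_de : d ≠ e
  hab : G.Adj a b
  hbc : G.Adj b c
  hcd : G.Adj c d
  hda : G.Adj d a
  Pa : G.Walk a e
  Pb : G.Walk b e
  Pc : G.Walk c e
  Pd : G.Walk d e
  hPa : Pa.IsPath
  hPb : Pb.IsPath
  hPc : Pc.IsPath
  hPd : Pd.IsPath
  hla : 2 ≤ Pa.length
  hlb : 2 ≤ Pb.length
  hlc : 2 ≤ Pc.length
  hld : 2 ≤ Pd.length
  dab : ∀ v, v ∈ Pa.support → v ∈ Pb.support → v = e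
  dac : ∀ v, v ∈ Pa.support → v ∈ Pc.support → v = e
  dad : ∀ v, v ∈ Pa.support → v ∈ Pd.support → v = e
  dbc : ∀ v, v ∈ Pb.support → v ∈ Pc.support → v = e
  dbd : ∀ v, v ∈ Pb.support → v ∈ Pd.support → v = e
  dcd : ∀ v, v ∈ Pc.support → v ∈ Pd.support → v = e
  hcovV : ∀ v : V, v ∈ Pa.support ∨ v ∈ Pb.support ∨ v ∈ Pc.support ∨ v ∈ Pd.support
  hcovE : ∀ u v, G.Adj u v → s(u, v) = s(a, b) ∨ s(u, v) = s(b, c) ∨ s(u, v) = s(c, d) ∨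
    s(u, v) = s(d, a) ∨ s(u, v) ∈ Pa.edges ∨ s(u, v) ∈ Pb.edges ∨ s(u, v) ∈ Pc.edges ∨
    s(u, v) ∈ Pd.edges

variable {V : Type} {G : SimpleGraph V}

def Core.rot (K : Core V G) : Core V G where
  a := K.b
  b := K.c
  c := K.d
  d := K.a
  e := K.e
  ne_ab := K.ne_bc
  ne_ac := K.ne_bd
  ne_ad := K.ne_ab.symm
  ne_ae := K.ne_be
  ne_bc := K.ne_cd
  ne_bd := K.ne_ac.symm
  ne_be := K.ne_ce
  ne_cd := K.ne_ad.symm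
  ne_ce := K.ne_de
  ne_de := K.ne_ae
  hab := K.hbc
  hbc := K.hcd
  hcd := K.hda
  hda := K.hab
  Pa := K.Pb
  Pb := K.Pc
  Pc := K.Pd
  Pd := K.Pa
  hPa := K.hPb
  hPb := K.hPc
  hPc := K.hPd
  hPd := K.hPa
  hla := K.hlb
  hlb := K.hlc
  hlc := K.hld
  hld := K.hla
  dab := K.dbc
  dac := K.dbd
  dad := fun v h1 h2 => K.dab v h2 h1
  dbc := K.dcd
  dbd := fun v h1 h2 => K.dac v h2 h1
  dcd := fun v h1 h2 => K.dad v h2 h1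
  hcovV := fun v => by have := K.hcovV v; tauto
  hcovE := fun u v h => by have := K.hcovE u v h; tauto



variable {K : Core V G}

namespace Core

lemma inja (K : Core V G) {i j : ℕ} (hi : i ≤ K.Pa.length) (hj : j ≤ K.Pa.length)
    (h : K.Pa.getVert i = K.Pa.getVert j) : i = j :=
  IsPath.getVert_inj K.hPa hi hj h

lemma b_notin_Pa (K : Core V G) : K.b ∉ K.Pa.support :=
  fun h => K.ne_be (K.dab K.b h K.Pb.start_mem_support)

lemma c_notin_Pa (K : Core V G) : K.c ∉ K.Pa.support :=
  fun h => K.ne_ce (K.dac K.c h K.Pc.start_mem_support)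

lemma d_notin_Pa (K : Core V G) : K.d ∉ K.Pa.support :=
  fun h => K.ne_de (K.dad K.d h K.Pd.start_mem_support)

lemma a_notin_sq_edge (K : Core V G) {x y : V} (hx : x ∈ K.Pa.support) (hxa : x ≠ K.a)
    (h : s(x, y) = s(K.a, K.b) ∨ s(x, y) = s(K.b, K.c) ∨ s(x, y) = s(K.c, K.d) ∨
      s(x, y) = s(K.d, K.a)) : False := by
  rcases h with h | h | h | h <;> rw [Sym2.eq_iff] at h <;>
    rcases h with ⟨h1, _⟩ | ⟨h1, _⟩ <;> subst h1 <;>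
    first
      | exact hxa rfl
      | exact K.b_notin_Pa hx
      | exact K.c_notin_Pa hx
      | exact K.d_notin_Pa hx

/-- Any edge at an internal vertex of `Pa` is an edge of `Pa`. -/
lemma nbrPaEdge (K : Core V G) {x y : V} (hx : x ∈ K.Pa.support) (hxa : x ≠ K.a)
    (hxe : x ≠ K.e) (h : G.Adj x y) : s(x, y) ∈ K.Pa.edges := by
  rcases K.hcovE x y h with h' | h' | h' | h' | h' | h' | h' | h'
  · exact absurd (Or.inl h') (fun hh => K.a_notin_sq_edge hx hxa hh)
  · exact absurd (Or.inr (Or.inl h')) (fun hh => K.a_notin_sq_edge hx hxa hh)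
  · exact absurd (Or.inr (Or.inr (Or.inl h'))) (fun hh => K.a_notin_sq_edge hx hxa hh)
  · exact absurd (Or.inr (Or.inr (Or.inr h'))) (fun hh => K.a_notin_sq_edge hx hxa hh)
  · exact h'
  · exact absurd (K.dab x hx (K.Pb.fst_mem_support_of_mem_edges h')) hxe
  · exact absurd (K.dac x hx (K.Pc.fst_mem_support_of_mem_edges h')) hxe
  · exact absurd (K.dad x hx (K.Pd.fst_mem_support_of_mem_edges h')) hxe

/-- Neighbours of `a`. -/
lemma nbrA (K : Core V G) {y : V} (h : G.Adj K.a y) :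
    y = K.b ∨ y = K.d ∨ y = K.Pa.getVert 1 := by
  rcases K.hcovE K.a y h with h' | h' | h' | h' | h' | h' | h' | h'
  · rw [Sym2.eq_iff] at h'
    rcases h' with ⟨_, h2⟩ | ⟨h1, _⟩
    · exact Or.inl h2
    · exact absurd h1 K.ne_ab
  · rw [Sym2.eq_iff] at h'
    rcases h' with ⟨h1, _⟩ | ⟨h1, _⟩
    · exact absurd h1 K.ne_ab
    · exact absurd h1 K.ne_ac
  · rw [Sym2.eq_iff] at h'
    rcases h' with ⟨h1, _⟩ | ⟨h1, _⟩
    · exact absurd h1 K.ne_ac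
    · exact absurd h1 K.ne_ad
  · rw [Sym2.eq_iff] at h'
    rcases h' with ⟨h1, h2⟩ | ⟨_, h2⟩
    · exact absurd h1 K.ne_ad
    · exact Or.inr (Or.inl h2)
  · obtain ⟨i, hi, hc⟩ := edge_index h'
    rcases hc with ⟨h1, h2⟩ | ⟨h1, h2⟩
    · have : i = 0 := K.inja (by omega) (by omega) (by rw [← h1, K.Pa.getVert_zero])
      subst this
      exact Or.inr (Or.inr h2)
    · exfalso
      have : i + 1 = 0 := K.inja (by omega) (by omega) (by rw [← h2, K.Pa.getVert_zero])
      omega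
  · exact absurd (K.dab K.a K.Pa.start_mem_support
      (K.Pb.fst_mem_support_of_mem_edges h')) K.ne_ae
  · exact absurd (K.dac K.a K.Pa.start_mem_support
      (K.Pc.fst_mem_support_of_mem_edges h')) K.ne_ae
  · exact absurd (K.dad K.a K.Pa.start_mem_support
      (K.Pd.fst_mem_support_of_mem_edges h')) K.ne_ae

/-- Internal vertices of `Pa` have exactly their path neighbours. -/
lemma nbrInt (K : Core V G) {i : ℕ} {y : V} (h0 : 0 < i) (hn : i < K.Pa.length)
    (h : G.Adj (K.Pa.getVert i) y) :
    y = K.Pa.getVert (i - 1) ∨ y = K.Pa.getVert (i + 1) := by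
  have hxa : K.Pa.getVert i ≠ K.a := by
    intro hh
    have : i = 0 := K.inja (by omega) (by omega) (by rw [hh, K.Pa.getVert_zero])
    omega
  have hxe : K.Pa.getVert i ≠ K.e := by
    intro hh
    have : i = K.Pa.length := K.inja (by omega) (le_refl _) (by rw [hh, K.Pa.getVert_length])
    omega
  have he := K.nbrPaEdge (getVert_mem_support _ (by omega)) hxa hxe h
  obtain ⟨j, hj, hc⟩ := edge_index he
  rcases hc with ⟨h1, h2⟩ | ⟨h1, h2⟩
  · have : i = j := K.inja (by omega) (by omega) h1
    subst this
    exact Or.inr h2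
  · have : i = j + 1 := K.inja (by omega) (by omega) h2
    rw [h1, this]
    exact Or.inl (by norm_num)

/-- Neighbours of `e` on `Pa`-edges. -/
lemma nbrE_Pa (K : Core V G) {y : V} (h : s(K.e, y) ∈ K.Pa.edges) :
    y = K.Pa.getVert (K.Pa.length - 1) := by
  obtain ⟨i, hi, hc⟩ := edge_index h
  rcases hc with ⟨h1, _⟩ | ⟨h1, h2⟩
  · exfalso
    have : i = K.Pa.length := K.inja (by omega) (le_refl _) (by rw [← h1, K.Pa.getVert_length])
    omega
  · have : i + 1 = K.Pa.length := K.inja (by omega) (le_refl _)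
      (by rw [← h2, K.Pa.getVert_length])
    rw [h1]
    congr 1
    omega

/-- Neighbours of `e`. -/
lemma nbrE (K : Core V G) {y : V} (h : G.Adj K.e y) :
    y = K.Pa.getVert (K.Pa.length - 1) ∨ y = K.Pb.getVert (K.Pb.length - 1) ∨
    y = K.Pc.getVert (K.Pc.length - 1) ∨ y = K.Pd.getVert (K.Pd.length - 1) := by
  rcases K.hcovE K.e y h with h' | h' | h' | h' | h' | h' | h' | h'
  · rw [Sym2.eq_iff] at h'
    rcases h' with ⟨h1, _⟩ | ⟨h1, _⟩
    · exact absurd h1.symm K.ne_ae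
    · exact absurd h1.symm K.ne_be
  · rw [Sym2.eq_iff] at h'
    rcases h' with ⟨h1, _⟩ | ⟨h1, _⟩
    · exact absurd h1.symm K.ne_be
    · exact absurd h1.symm K.ne_ce
  · rw [Sym2.eq_iff] at h'
    rcases h' with ⟨h1, _⟩ | ⟨h1, _⟩
    · exact absurd h1.symm K.ne_ce
    · exact absurd h1.symm K.ne_de
  · rw [Sym2.eq_iff] at h'
    rcases h' with ⟨h1, _⟩ | ⟨h1, _⟩
    · exact absurd h1.symm K.ne_de
    · exact absurd h1.symm K.ne_ae
  · exact Or.inl (K.nbrE_Pa h')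
  · exact Or.inr (Or.inl (K.rot.nbrE_Pa h'))
  · exact Or.inr (Or.inr (Or.inl (K.rot.rot.nbrE_Pa h')))
  · exact Or.inr (Or.inr (Or.inr (K.rot.rot.rot.nbrE_Pa h')))

lemma sa_ne_e (K : Core V G) : K.Pa.getVert 1 ≠ K.e := by
  intro h
  have : (1 : ℕ) = K.Pa.length := K.inja (by have := K.hla; omega) (le_refl _)
    (by rw [h, K.Pa.getVert_length])
  have := K.hla
  omega

end Core

def NS (G : SimpleGraph V) (v : V) : Set V := {u | u = v ∨ G.Adj v u}

lemma mem_NS_iff {v u : V} : u ∈ NS G v ↔ u = v ∨ G.Adj v u := Iff.rfl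


namespace Core

lemma adjE_penA (K : Core V G) : G.Adj (K.Pa.getVert (K.Pa.length - 1)) K.e := by
  have h := K.Pa.adj_getVert_succ (i := K.Pa.length - 1) (by have := K.hla; omega)
  rw [show K.Pa.length - 1 + 1 = K.Pa.length by have := K.hla; omega,
    K.Pa.getVert_length] at h
  exact h

lemma penA_mem (K : Core V G) : K.Pa.getVert (K.Pa.length - 1) ∈ K.Pa.support :=
  getVert_mem_support _ (by omega)

lemma penA_ne_e (K : Core V G) : K.Pa.getVert (K.Pa.length - 1) ≠ K.e :=
  K.adjE_penA.ne

-- rotated wrappers, restated explicitly (they hold by definitional unfolding of `rot`)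
lemma nbrB (K : Core V G) {y : V} (h : G.Adj K.b y) :
    y = K.c ∨ y = K.a ∨ y = K.Pb.getVert 1 := K.rot.nbrA h

lemma nbrC (K : Core V G) {y : V} (h : G.Adj K.c y) :
    y = K.d ∨ y = K.b ∨ y = K.Pc.getVert 1 := K.rot.rot.nbrA h

lemma nbrD (K : Core V G) {y : V} (h : G.Adj K.d y) :
    y = K.a ∨ y = K.c ∨ y = K.Pd.getVert 1 := K.rot.rot.rot.nbrA h

lemma nbrIntB (K : Core V G) {i : ℕ} {y : V} (h0 : 0 < i) (hn : i < K.Pb.length)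
    (h : G.Adj (K.Pb.getVert i) y) :
    y = K.Pb.getVert (i - 1) ∨ y = K.Pb.getVert (i + 1) := K.rot.nbrInt h0 hn h

lemma sb_ne_e (K : Core V G) : K.Pb.getVert 1 ≠ K.e := K.rot.sa_ne_e
lemma sc_ne_e (K : Core V G) : K.Pc.getVert 1 ≠ K.e := K.rot.rot.sa_ne_e
lemma sd_ne_e (K : Core V G) : K.Pd.getVert 1 ≠ K.e := K.rot.rot.rot.sa_ne_e

lemma adjE_penB (K : Core V G) : G.Adj (K.Pb.getVert (K.Pb.length - 1)) K.e :=
  K.rot.adjE_penA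
lemma penB_mem (K : Core V G) : K.Pb.getVert (K.Pb.length - 1) ∈ K.Pb.support :=
  K.rot.penA_mem
lemma penB_ne_e (K : Core V G) : K.Pb.getVert (K.Pb.length - 1) ≠ K.e :=
  K.rot.penA_ne_e
lemma penC_mem (K : Core V G) : K.Pc.getVert (K.Pc.length - 1) ∈ K.Pc.support :=
  K.rot.rot.penA_mem
lemma penD_mem (K : Core V G) : K.Pd.getVert (K.Pd.length - 1) ∈ K.Pd.support :=
  K.rot.rot.rot.penA_mem

/-- Lemma A, case `u = a`. -/
lemma LA_a (K : Core V G) {v : V} (huv : K.a ≠ v) :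
    ∃ w, G.Adj K.a w ∧ w ∉ NS G v := by
  by_contra hcon
  push_neg at hcon
  have hadj_sa : G.Adj K.a (K.Pa.getVert 1) := by
    have h := K.Pa.adj_getVert_succ (i := 0) (by have := K.hla; omega)
    rwa [K.Pa.getVert_zero] at h
  have hb := hcon K.b K.hab
  have hd := hcon K.d K.hda.symm
  have hsa := hcon (K.Pa.getVert 1) hadj_sa
  have sa_mem : K.Pa.getVert 1 ∈ K.Pa.support :=
    getVert_mem_support _ (by have := K.hla; omega)
  rcases hb with hb | hb
  · -- v = b
    subst hb
    rcases hd with hd | hd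
    · exact K.ne_bd hd.symm
    · rcases K.nbrB hd with h | h | h
      · exact K.ne_cd h.symm
      · exact K.ne_ad h.symm
      · exact K.ne_de (K.dbd K.d (h ▸ getVert_mem_support _ (by have := K.hlb; omega))
          K.Pd.start_mem_support)
  rcases hd with hd | hd
  · -- v = d
    subst hd
    rcases K.nbrD hb with h | h | h
    · exact K.ne_ab h.symm
    · exact K.ne_bc h
    · exact K.ne_be (K.dbd K.b K.Pb.start_mem_support
        (h ▸ getVert_mem_support _ (by have := K.hld; omega)))
  -- Adj v b and Adj v d
  have hv1 := K.nbrB hb.symm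
  have hv2 := K.nbrD hd.symm
  have sb_mem : K.Pb.getVert 1 ∈ K.Pb.support :=
    getVert_mem_support _ (by have := K.hlb; omega)
  have sd_mem : K.Pd.getVert 1 ∈ K.Pd.support :=
    getVert_mem_support _ (by have := K.hld; omega)
  have hvc : v = K.c := by
    rcases hv1 with h1 | h1 | h1
    · exact h1
    · exact absurd h1.symm huv
    · rcases hv2 with h2 | h2 | h2
      · exact absurd h2.symm huv
      · have hh : K.Pb.getVert 1 = K.c := h1.symm.trans h2
        exact absurd (K.dbc K.c (hh ▸ sb_mem) K.Pc.start_mem_support) K.ne_ce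
      · have hh : K.Pb.getVert 1 = K.Pd.getVert 1 := h1.symm.trans h2
        exact absurd (K.dbd _ (hh ▸ sb_mem) sd_mem) K.sd_ne_e
  subst hvc
  rcases hsa with h | h
  · exact K.c_notin_Pa (h ▸ sa_mem)
  · rcases K.nbrC h with h' | h' | h'
    · exact K.d_notin_Pa (h' ▸ sa_mem)
    · exact K.b_notin_Pa (h' ▸ sa_mem)
    · exact K.sa_ne_e (K.dac _ sa_mem (h' ▸ getVert_mem_support _ (by have := K.hlc; omega)))

/-- Lemma A, case `u = e`. -/
lemma LA_e (K : Core V G) {v : V} (huv : K.e ≠ v) :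
    ∃ w, G.Adj K.e w ∧ w ∉ NS G v := by
  by_contra hcon
  push_neg at hcon
  have hA := hcon _ K.adjE_penA.symm
  have hB := hcon _ K.adjE_penB.symm
  have hBA : K.Pb.getVert (K.Pb.length - 1) ∉ K.Pa.support := by
    intro hh
    exact K.penB_ne_e (K.dab _ hh K.penB_mem)
  have hAB : K.Pa.getVert (K.Pa.length - 1) ∉ K.Pb.support := by
    intro hh
    exact K.penA_ne_e (K.dab _ K.penA_mem hh)
  rcases hA with hA | hA
  · -- v = penA
    subst hA
    rcases hB with hB | hB
    · exact hBA (hB ▸ K.penA_mem)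
    · rcases K.nbrInt (i := K.Pa.length - 1) (by have := K.hla; omega)
        (by have := K.hla; omega) hB with h | h
      · exact hBA (h ▸ getVert_mem_support _ (by omega))
      · rw [show K.Pa.length - 1 + 1 = K.Pa.length by have := K.hla; omega,
          K.Pa.getVert_length] at h
        exact K.penB_ne_e h
  rcases hB with hB | hB
  · -- v = penB
    subst hB
    rcases K.nbrIntB (i := K.Pb.length - 1) (by have := K.hlb; omega)
      (by have := K.hlb; omega) hA with h | h
    · exact hAB (h ▸ getVert_mem_support _ (by omega))
    · rw [show K.Pb.length - 1 + 1 = K.Pb.length by have := K.hlb; omega,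
        K.Pb.getVert_length] at h
      exact K.penA_ne_e h
  -- Adj v penA and Adj v penB
  have h1 := K.nbrInt (i := K.Pa.length - 1) (by have := K.hla; omega)
    (by have := K.hla; omega) hA.symm
  have h2 := K.nbrIntB (i := K.Pb.length - 1) (by have := K.hlb; omega)
    (by have := K.hlb; omega) hB.symm
  rw [show K.Pa.length - 1 + 1 = K.Pa.length by have := K.hla; omega,
    K.Pa.getVert_length] at h1
  rw [show K.Pb.length - 1 + 1 = K.Pb.length by have := K.hlb; omega,
    K.Pb.getVert_length] at h2
  rcases h1 with h1 | h1
  · rcases h2 with h2 | h2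
    · exact huv (K.dab v (h1 ▸ getVert_mem_support _ (by omega))
        (h2 ▸ getVert_mem_support _ (by omega))).symm
    · exact huv h2.symm
  · exact huv h1.symm

/-- Lemma A, case `u` internal on `Pa`. -/
lemma LA_int (K : Core V G) {v : V} {i : ℕ} (h0 : 0 < i) (hn : i < K.Pa.length)
    (huv : K.Pa.getVert i ≠ v) :
    ∃ w, G.Adj (K.Pa.getVert i) w ∧ w ∉ NS G v := by
  by_contra hcon
  push_neg at hcon
  have hadj1 : G.Adj (K.Pa.getVert i) (K.Pa.getVert (i - 1)) := by
    have h := K.Pa.adj_getVert_succ (i := i - 1) (by omega)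
    rw [show i - 1 + 1 = i by omega] at h
    exact h.symm
  have hadj2 : G.Adj (K.Pa.getVert i) (K.Pa.getVert (i + 1)) :=
    K.Pa.adj_getVert_succ hn
  have h1 := hcon _ hadj1
  have h2 := hcon _ hadj2
  have p1mem : K.Pa.getVert (i - 1) ∈ K.Pa.support := getVert_mem_support _ (by omega)
  have p2mem : K.Pa.getVert (i + 1) ∈ K.Pa.support := getVert_mem_support _ (by omega)
  rcases h1 with h1 | h1 <;> rcases h2 with h2 | h2
  · -- both equal v
    have := K.inja (i := i - 1) (j := i + 1) (by omega) (by omega) (h1.trans h2.symm)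
    omega
  · -- v = p1, Adj v p2
    rw [← h1] at h2
    by_cases hi1 : i = 1
    · subst hi1
      rw [show (1 : ℕ) - 1 = 0 from rfl, K.Pa.getVert_zero] at h2
      rcases K.nbrA h2 with h | h | h
      · exact K.b_notin_Pa (h ▸ p2mem)
      · exact K.d_notin_Pa (h ▸ p2mem)
      · have := K.inja (i := 1 + 1) (j := 1) (by omega) (by omega) h
        omega
    · rcases K.nbrInt (i := i - 1) (by omega) (by omega) h2 with h | h
      · have := K.inja (i := i + 1) (j := i - 1 - 1) (by omega) (by omega) h
        omega
      · have := K.inja (i := i + 1) (j := i - 1 + 1) (by omega) (by omega) h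
        omega
  · -- Adj v p1, v = p2
    rw [← h2] at h1
    by_cases hin : i + 1 = K.Pa.length
    · rw [hin, K.Pa.getVert_length] at h1
      rcases K.nbrE h1 with h | h | h | h
      · have := K.inja (i := i - 1) (j := K.Pa.length - 1) (by omega) (by omega) h
        omega
      · have he : K.Pa.getVert (i - 1) = K.e :=
          K.dab _ p1mem (h ▸ K.penB_mem)
        have := K.inja (i := i - 1) (j := K.Pa.length) (by omega) (le_refl _)
          (by rw [he, K.Pa.getVert_length])
        omega
      · have he : K.Pa.getVert (i - 1) = K.e :=
          K.dac _ p1mem (h ▸ K.penC_mem)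
        have := K.inja (i := i - 1) (j := K.Pa.length) (by omega) (le_refl _)
          (by rw [he, K.Pa.getVert_length])
        omega
      · have he : K.Pa.getVert (i - 1) = K.e :=
          K.dad _ p1mem (h ▸ K.penD_mem)
        have := K.inja (i := i - 1) (j := K.Pa.length) (by omega) (le_refl _)
          (by rw [he, K.Pa.getVert_length])
        omega
    · rcases K.nbrInt (i := i + 1) (by omega) (by omega) h1 with h | h
      · have := K.inja (i := i - 1) (j := i + 1 - 1) (by omega) (by omega) h
        omega
      · have := K.inja (i := i - 1) (j := i + 1 + 1) (by omega) (by omega) h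
        omega
  · -- Adj v p1 and Adj v p2
    by_cases hi1 : i = 1
    · subst hi1
      rw [show (1 : ℕ) - 1 = 0 from rfl, K.Pa.getVert_zero] at h1
      rcases K.nbrA h1.symm with h | h | h
      · -- v = b
        subst h
        rcases K.nbrB h2 with h' | h' | h'
        · exact K.c_notin_Pa (h' ▸ p2mem)
        · have := K.inja (i := 1 + 1) (j := 0) (by omega) (by omega)
            (by rw [h', K.Pa.getVert_zero])
          omega
        · exact K.sb_ne_e (K.dab _ (h' ▸ p2mem)
            (getVert_mem_support _ (by have := K.hlb; omega)))
      · -- v = d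
        subst h
        rcases K.nbrD h2 with h' | h' | h'
        · have := K.inja (i := 1 + 1) (j := 0) (by omega) (by omega)
            (by rw [h', K.Pa.getVert_zero])
          omega
        · exact K.c_notin_Pa (h' ▸ p2mem)
        · exact K.sd_ne_e (K.dad _ (h' ▸ p2mem)
            (getVert_mem_support _ (by have := K.hld; omega)))
      · exact huv h.symm
    · rcases K.nbrInt (i := i - 1) (by omega) (by omega) h1.symm with h | h
      · -- v = gVa (i-2)
        rw [h] at h2
        by_cases hi2 : i = 2
        · subst hi2
          rw [show (2 : ℕ) - 1 - 1 = 0 from rfl, K.Pa.getVert_zero] at h2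
          rcases K.nbrA h2 with h' | h' | h'
          · exact K.b_notin_Pa (h' ▸ p2mem)
          · exact K.d_notin_Pa (h' ▸ p2mem)
          · have := K.inja (i := 2 + 1) (j := 1) (by omega) (by omega) h'
            omega
        · rcases K.nbrInt (i := i - 1 - 1) (by omega) (by omega) h2 with h' | h'
          · have := K.inja (i := i + 1) (j := i - 1 - 1 - 1) (by omega) (by omega) h'
            omega
          · have := K.inja (i := i + 1) (j := i - 1 - 1 + 1) (by omega) (by omega) h'
            omega
      · rw [show i - 1 + 1 = i by omega] at h
        exact huv h.symm

/-- Lemma A for vertices on `Pa`. -/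
lemma LA_Pa (K : Core V G) {v u : V} (hu : u ∈ K.Pa.support) (huv : u ≠ v) :
    ∃ w, G.Adj u w ∧ w ∉ NS G v := by
  obtain ⟨i, hgi, hin⟩ := Walk.mem_support_iff_exists_getVert.1 hu
  subst hgi
  rcases Nat.eq_zero_or_pos i with h0 | h0
  · subst h0
    rw [K.Pa.getVert_zero] at huv ⊢
    exact K.LA_a huv
  rcases eq_or_lt_of_le hin with hn | hn
  · rw [hn, K.Pa.getVert_length] at huv ⊢
    exact K.LA_e huv
  · exact K.LA_int h0 hn huv

/-- Lemma A. -/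
lemma LA (K : Core V G) {v u : V} (huv : u ≠ v) :
    ∃ w, G.Adj u w ∧ w ∉ NS G v := by
  rcases K.hcovV u with h | h | h | h
  · exact K.LA_Pa h huv
  · exact K.rot.LA_Pa h huv
  · exact K.rot.rot.LA_Pa h huv
  · exact K.rot.rot.rot.LA_Pa h huv

end Core

lemma avoid_prefix {S : Set V} {u v : V} (p : G.Walk u v) {i : ℕ} (hi : i ≤ p.length)
    (hS : ∀ j, j ≤ p.length → p.getVert j ∈ S → i < j) : Avoid G S (p.getVert i) u := by
  obtain ⟨q, hq⟩ := exists_prefix_walk p hi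
  refine Avoid.symm ⟨q, ?_⟩
  intro z hz hzS
  obtain ⟨j, hj, rfl⟩ := hq z hz
  exact absurd (hS j (by omega) hzS) (by omega)

lemma avoid_suffix {S : Set V} {u v : V} (p : G.Walk u v) {i : ℕ} (hi : i ≤ p.length)
    (hS : ∀ j, j ≤ p.length → p.getVert j ∈ S → j < i) : Avoid G S (p.getVert i) v := by
  obtain ⟨q, hq⟩ := exists_suffix_walk p (p.length - i) i (by omega)
  refine ⟨q, ?_⟩
  intro z hz hzS
  obtain ⟨j, hj1, hj2, rfl⟩ := hq z hz
  exact absurd (hS j hj2 hzS) (by omega)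

namespace Core

lemma injb (K : Core V G) {i j : ℕ} (hi : i ≤ K.Pb.length) (hj : j ≤ K.Pb.length)
    (h : K.Pb.getVert i = K.Pb.getVert j) : i = j := K.rot.inja hi hj h
lemma injc (K : Core V G) {i j : ℕ} (hi : i ≤ K.Pc.length) (hj : j ≤ K.Pc.length)
    (h : K.Pc.getVert i = K.Pc.getVert j) : i = j := K.rot.rot.inja hi hj h
lemma injd (K : Core V G) {i j : ℕ} (hi : i ≤ K.Pd.length) (hj : j ≤ K.Pd.length)
    (h : K.Pd.getVert i = K.Pd.getVert j) : i = j := K.rot.rot.rot.inja hi hj h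

lemma a_notin_Pb (K : Core V G) : K.a ∉ K.Pb.support := K.rot.d_notin_Pa
lemma a_notin_Pc (K : Core V G) : K.a ∉ K.Pc.support := K.rot.rot.c_notin_Pa
lemma a_notin_Pd (K : Core V G) : K.a ∉ K.Pd.support := K.rot.rot.rot.b_notin_Pa
lemma b_notin_Pc (K : Core V G) : K.b ∉ K.Pc.support := K.rot.rot.d_notin_Pa
lemma b_notin_Pd (K : Core V G) : K.b ∉ K.Pd.support := K.rot.rot.rot.c_notin_Pa
lemma c_notin_Pb (K : Core V G) : K.c ∉ K.Pb.support := K.rot.b_notin_Pa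
lemma c_notin_Pd (K : Core V G) : K.c ∉ K.Pd.support := K.rot.rot.rot.d_notin_Pa
lemma d_notin_Pb (K : Core V G) : K.d ∉ K.Pb.support := K.rot.c_notin_Pa
lemma d_notin_Pc (K : Core V G) : K.d ∉ K.Pc.support := K.rot.rot.b_notin_Pa

lemma adjA_sa (K : Core V G) : G.Adj K.a (K.Pa.getVert 1) := by
  have h := K.Pa.adj_getVert_succ (i := 0) (by have := K.hla; omega)
  rwa [K.Pa.getVert_zero] at h

lemma sa_mem (K : Core V G) : K.Pa.getVert 1 ∈ K.Pa.support :=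
  getVert_mem_support _ (by have := K.hla; omega)

lemma NS_a_char (K : Core V G) {z : V} (hz : z ∈ NS G K.a) :
    z = K.a ∨ z = K.b ∨ z = K.d ∨ z = K.Pa.getVert 1 := by
  rcases hz with hz | hz
  · exact Or.inl hz
  · rcases K.nbrA hz with h | h | h
    exacts [Or.inr (Or.inl h), Or.inr (Or.inr (Or.inl h)), Or.inr (Or.inr (Or.inr h))]

/-- LB, centre `a`, vertices of `Pa`. -/
lemma LB_a_Pa (K : Core V G) {x : V} (hx : x ∈ K.Pa.support) (hxS : x ∉ NS G K.a) :
    Avoid G (NS G K.a) x K.e := by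
  obtain ⟨i, hgi, hi⟩ := Walk.mem_support_iff_exists_getVert.1 hx
  subst hgi
  have hi0 : i ≠ 0 := by
    rintro rfl
    exact hxS (by rw [K.Pa.getVert_zero]; exact Or.inl rfl)
  have hi1 : i ≠ 1 := by
    rintro rfl
    exact hxS (Or.inr K.adjA_sa)
  refine avoid_suffix K.Pa hi ?_
  intro j hj hjS
  rcases K.NS_a_char hjS with h | h | h | h
  · have : j = 0 := K.inja hj (by omega) (by rw [h, K.Pa.getVert_zero])
    omega
  · exact absurd (h ▸ getVert_mem_support K.Pa hj) K.b_notin_Pa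
  · exact absurd (h ▸ getVert_mem_support K.Pa hj) K.d_notin_Pa
  · have : j = 1 := K.inja hj (by have := K.hla; omega) h
    omega

/-- LB, centre `a`, vertices of `Pb`. -/
lemma LB_a_Pb (K : Core V G) {x : V} (hx : x ∈ K.Pb.support) (hxS : x ∉ NS G K.a) :
    Avoid G (NS G K.a) x K.e := by
  obtain ⟨i, hgi, hi⟩ := Walk.mem_support_iff_exists_getVert.1 hx
  subst hgi
  have hi0 : i ≠ 0 := by
    rintro rfl
    exact hxS (by rw [K.Pb.getVert_zero]; exact Or.inr K.hab)
  refine avoid_suffix K.Pb hi ?_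
  intro j hj hjS
  rcases K.NS_a_char hjS with h | h | h | h
  · exact absurd (h ▸ getVert_mem_support K.Pb hj) K.a_notin_Pb
  · have : j = 0 := K.injb hj (by omega) (by rw [h, K.Pb.getVert_zero])
    omega
  · exact absurd (h ▸ getVert_mem_support K.Pb hj) K.d_notin_Pb
  · exact absurd (K.dab _ (h ▸ K.sa_mem) (h ▸ getVert_mem_support K.Pb hj)) K.sa_ne_e

/-- LB, centre `a`, vertices of `Pc`. -/
lemma LB_a_Pc (K : Core V G) {x : V} (hx : x ∈ K.Pc.support) (hxS : x ∉ NS G K.a) :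
    Avoid G (NS G K.a) x K.e := by
  obtain ⟨i, hgi, hi⟩ := Walk.mem_support_iff_exists_getVert.1 hx
  subst hgi
  refine avoid_suffix K.Pc hi ?_
  intro j hj hjS
  rcases K.NS_a_char hjS with h | h | h | h
  · exact absurd (h ▸ getVert_mem_support K.Pc hj) K.a_notin_Pc
  · exact absurd (h ▸ getVert_mem_support K.Pc hj) K.b_notin_Pc
  · exact absurd (h ▸ getVert_mem_support K.Pc hj) K.d_notin_Pc
  · exact absurd (K.dac _ (h ▸ K.sa_mem) (h ▸ getVert_mem_support K.Pc hj)) K.sa_ne_e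

/-- LB, centre `a`, vertices of `Pd`. -/
lemma LB_a_Pd (K : Core V G) {x : V} (hx : x ∈ K.Pd.support) (hxS : x ∉ NS G K.a) :
    Avoid G (NS G K.a) x K.e := by
  obtain ⟨i, hgi, hi⟩ := Walk.mem_support_iff_exists_getVert.1 hx
  subst hgi
  have hi0 : i ≠ 0 := by
    rintro rfl
    exact hxS (by rw [K.Pd.getVert_zero]; exact Or.inr K.hda.symm)
  refine avoid_suffix K.Pd hi ?_
  intro j hj hjS
  rcases K.NS_a_char hjS with h | h | h | h
  · exact absurd (h ▸ getVert_mem_support K.Pd hj) K.a_notin_Pd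
  · exact absurd (h ▸ getVert_mem_support K.Pd hj) K.b_notin_Pd
  · have : j = 0 := K.injd hj (by omega) (by rw [h, K.Pd.getVert_zero])
    omega
  · exact absurd (K.dad _ (h ▸ K.sa_mem) (h ▸ getVert_mem_support K.Pd hj)) K.sa_ne_e

/-- LB with centre `a`. -/
lemma LB_a_full (K : Core V G) {x : V} (hxS : x ∉ NS G K.a) :
    Avoid G (NS G K.a) x K.e := by
  rcases K.hcovV x with h | h | h | h
  exacts [K.LB_a_Pa h hxS, K.LB_a_Pb h hxS, K.LB_a_Pc h hxS, K.LB_a_Pd h hxS]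

lemma NS_e_char (K : Core V G) {z : V} (hz : z ∈ NS G K.e) :
    z = K.e ∨ z = K.Pa.getVert (K.Pa.length - 1) ∨ z = K.Pb.getVert (K.Pb.length - 1) ∨
    z = K.Pc.getVert (K.Pc.length - 1) ∨ z = K.Pd.getVert (K.Pd.length - 1) := by
  rcases hz with hz | hz
  · exact Or.inl hz
  · exact Or.inr (K.nbrE hz)

/-- LB, centre `e`, vertices of `Pa`. -/
lemma LB_e_Pa (K : Core V G) {x : V} (hx : x ∈ K.Pa.support) (hxS : x ∉ NS G K.e) :
    Avoid G (NS G K.e) x K.a := by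
  obtain ⟨i, hgi, hi⟩ := Walk.mem_support_iff_exists_getVert.1 hx
  subst hgi
  have hin : i ≠ K.Pa.length := by
    rintro rfl
    exact hxS (by rw [K.Pa.getVert_length]; exact Or.inl rfl)
  have hin1 : i ≠ K.Pa.length - 1 := by
    rintro rfl
    exact hxS (Or.inr K.adjE_penA.symm)
  refine avoid_prefix K.Pa hi ?_
  intro j hj hjS
  rcases K.NS_e_char hjS with h | h | h | h | h
  · have : j = K.Pa.length := K.inja hj (le_refl _) (by rw [h, K.Pa.getVert_length])
    omega
  · have : j = K.Pa.length - 1 := K.inja hj (by omega) h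
    omega
  · have he : K.Pa.getVert j = K.e := K.dab _ (getVert_mem_support K.Pa hj) (h ▸ K.penB_mem)
    exact absurd (h ▸ he) K.penB_ne_e
  · have he : K.Pa.getVert j = K.e := K.dac _ (getVert_mem_support K.Pa hj) (h ▸ K.penC_mem)
    exact absurd (h ▸ he) K.rot.rot.penA_ne_e
  · have he : K.Pa.getVert j = K.e := K.dad _ (getVert_mem_support K.Pa hj) (h ▸ K.penD_mem)
    exact absurd (h ▸ he) K.rot.rot.rot.penA_ne_e

lemma LB_e_Pb (K : Core V G) {x : V} (hx : x ∈ K.Pb.support) (hxS : x ∉ NS G K.e) :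
    Avoid G (NS G K.e) x K.b := by
  have h := K.rot.LB_e_Pa (x := x) hx
  exact h (by
    intro hc
    exact hxS (by
      rcases hc with hc | hc
      · exact Or.inl hc
      · exact Or.inr hc))

lemma LB_e_Pc (K : Core V G) {x : V} (hx : x ∈ K.Pc.support) (hxS : x ∉ NS G K.e) :
    Avoid G (NS G K.e) x K.c := K.rot.LB_e_Pb hx hxS

lemma LB_e_Pd (K : Core V G) {x : V} (hx : x ∈ K.Pd.support) (hxS : x ∉ NS G K.e) :
    Avoid G (NS G K.e) x K.d := K.rot.LB_e_Pc hx hxS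

lemma a_notin_NSe (K : Core V G) : K.a ∉ NS G K.e := by
  intro h
  rcases K.NS_e_char h with h | h | h | h | h
  · exact K.ne_ae h
  · have : (0 : ℕ) = K.Pa.length - 1 :=
      K.inja (by omega) (by omega) (by rw [K.Pa.getVert_zero, ← h])
    have := K.hla
    omega
  · exact K.a_notin_Pb (h ▸ K.penB_mem)
  · exact K.a_notin_Pc (h ▸ K.penC_mem)
  · exact K.a_notin_Pd (h ▸ K.penD_mem)

lemma b_notin_NSe (K : Core V G) : K.b ∉ NS G K.e := K.rot.a_notin_NSe
lemma c_notin_NSe (K : Core V G) : K.c ∉ NS G K.e := K.rot.rot.a_notin_NSe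
lemma d_notin_NSe (K : Core V G) : K.d ∉ NS G K.e := K.rot.rot.rot.a_notin_NSe

/-- LB with centre `e`. -/
lemma LB_e_full (K : Core V G) {x : V} (hxS : x ∉ NS G K.e) :
    Avoid G (NS G K.e) x K.a := by
  rcases K.hcovV x with h | h | h | h
  · exact K.LB_e_Pa h hxS
  · exact (K.LB_e_Pb h hxS).trans (Avoid.of_adj K.hab.symm K.b_notin_NSe K.a_notin_NSe)
  · exact ((K.LB_e_Pc h hxS).trans
      (Avoid.of_adj K.hbc.symm K.c_notin_NSe K.b_notin_NSe)).trans
      (Avoid.of_adj K.hab.symm K.b_notin_NSe K.a_notin_NSe)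
  · exact (K.LB_e_Pd h hxS).trans (Avoid.of_adj K.hda K.d_notin_NSe K.a_notin_NSe)

end Core

namespace Core

lemma NS_int_char (K : Core V G) {k : ℕ} (h0 : 0 < k) (hn : k < K.Pa.length) {z : V}
    (hz : z ∈ NS G (K.Pa.getVert k)) :
    ∃ j, j ≤ K.Pa.length ∧ (j = k - 1 ∨ j = k ∨ j = k + 1) ∧ z = K.Pa.getVert j := by
  rcases hz with hz | hz
  · exact ⟨k, by omega, Or.inr (Or.inl rfl), hz⟩
  · rcases K.nbrInt h0 hn hz with h | h
    · exact ⟨k - 1, by omega, Or.inl rfl, h⟩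
    · exact ⟨k + 1, by omega, Or.inr (Or.inr rfl), h⟩

lemma b_notin_NSint (K : Core V G) {k : ℕ} (h0 : 0 < k) (hn : k < K.Pa.length) :
    K.b ∉ NS G (K.Pa.getVert k) := by
  intro h
  obtain ⟨j, hj, _, hb⟩ := K.NS_int_char h0 hn h
  exact K.b_notin_Pa (hb ▸ getVert_mem_support K.Pa hj)

lemma c_notin_NSint (K : Core V G) {k : ℕ} (h0 : 0 < k) (hn : k < K.Pa.length) :
    K.c ∉ NS G (K.Pa.getVert k) := by
  intro h
  obtain ⟨j, hj, _, hb⟩ := K.NS_int_char h0 hn h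
  exact K.c_notin_Pa (hb ▸ getVert_mem_support K.Pa hj)

lemma d_notin_NSint (K : Core V G) {k : ℕ} (h0 : 0 < k) (hn : k < K.Pa.length) :
    K.d ∉ NS G (K.Pa.getVert k) := by
  intro h
  obtain ⟨j, hj, _, hb⟩ := K.NS_int_char h0 hn h
  exact K.d_notin_Pa (hb ▸ getVert_mem_support K.Pa hj)

/-- LB, interior centre, vertices of `Pb`. -/
lemma LB_int_Pb (K : Core V G) {k : ℕ} (h0 : 0 < k) (hn : k < K.Pa.length) {x : V}
    (hx : x ∈ K.Pb.support) (hxS : x ∉ NS G (K.Pa.getVert k)) :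
    Avoid G (NS G (K.Pa.getVert k)) x K.b := by
  obtain ⟨i, hgi, hi⟩ := Walk.mem_support_iff_exists_getVert.1 hx
  subst hgi
  refine avoid_prefix K.Pb hi ?_
  intro j hj hjS
  obtain ⟨j', hj', _, hz⟩ := K.NS_int_char h0 hn hjS
  have he : K.Pb.getVert j = K.e :=
    K.dab _ (hz ▸ getVert_mem_support K.Pa hj') (getVert_mem_support K.Pb hj)
  have hjn : j = K.Pb.length := K.injb hj (le_refl _) (by rw [he, K.Pb.getVert_length])
  have hie : i ≠ K.Pb.length := by
    rintro rfl
    rw [K.Pb.getVert_length] at hxS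
    exact hxS (Set.mem_of_eq_of_mem he.symm hjS)
  omega

lemma LB_int_Pc (K : Core V G) {k : ℕ} (h0 : 0 < k) (hn : k < K.Pa.length) {x : V}
    (hx : x ∈ K.Pc.support) (hxS : x ∉ NS G (K.Pa.getVert k)) :
    Avoid G (NS G (K.Pa.getVert k)) x K.c := by
  obtain ⟨i, hgi, hi⟩ := Walk.mem_support_iff_exists_getVert.1 hx
  subst hgi
  refine avoid_prefix K.Pc hi ?_
  intro j hj hjS
  obtain ⟨j', hj', _, hz⟩ := K.NS_int_char h0 hn hjS
  have he : K.Pc.getVert j = K.e :=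
    K.dac _ (hz ▸ getVert_mem_support K.Pa hj') (getVert_mem_support K.Pc hj)
  have hjn : j = K.Pc.length := K.injc hj (le_refl _) (by rw [he, K.Pc.getVert_length])
  have hie : i ≠ K.Pc.length := by
    rintro rfl
    rw [K.Pc.getVert_length] at hxS
    exact hxS (Set.mem_of_eq_of_mem he.symm hjS)
  omega

lemma LB_int_Pd (K : Core V G) {k : ℕ} (h0 : 0 < k) (hn : k < K.Pa.length) {x : V}
    (hx : x ∈ K.Pd.support) (hxS : x ∉ NS G (K.Pa.getVert k)) :
    Avoid G (NS G (K.Pa.getVert k)) x K.d := by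
  obtain ⟨i, hgi, hi⟩ := Walk.mem_support_iff_exists_getVert.1 hx
  subst hgi
  refine avoid_prefix K.Pd hi ?_
  intro j hj hjS
  obtain ⟨j', hj', _, hz⟩ := K.NS_int_char h0 hn hjS
  have he : K.Pd.getVert j = K.e :=
    K.dad _ (hz ▸ getVert_mem_support K.Pa hj') (getVert_mem_support K.Pd hj)
  have hjn : j = K.Pd.length := K.injd hj (le_refl _) (by rw [he, K.Pd.getVert_length])
  have hie : i ≠ K.Pd.length := by
    rintro rfl
    rw [K.Pd.getVert_length] at hxS
    exact hxS (Set.mem_of_eq_of_mem he.symm hjS)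
  omega

/-- LB, interior centre, vertices of `Pa`. -/
lemma LB_int_Pa (K : Core V G) {k : ℕ} (h0 : 0 < k) (hn : k < K.Pa.length) {x : V}
    (hx : x ∈ K.Pa.support) (hxS : x ∉ NS G (K.Pa.getVert k)) :
    Avoid G (NS G (K.Pa.getVert k)) x K.b := by
  obtain ⟨i, hgi, hi⟩ := Walk.mem_support_iff_exists_getVert.1 hx
  subst hgi
  have hik : i ≠ k := by
    rintro rfl
    exact hxS (Or.inl rfl)
  have hik1 : i ≠ k - 1 := by
    rintro rfl
    refine hxS (Or.inr ?_)
    have h := K.Pa.adj_getVert_succ (i := k - 1) (by omega)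
    rw [show k - 1 + 1 = k by omega] at h
    exact h.symm
  have hik2 : i ≠ k + 1 := by
    rintro rfl
    exact hxS (Or.inr (K.Pa.adj_getVert_succ hn))
  have hchar : ∀ j, j ≤ K.Pa.length → K.Pa.getVert j ∈ NS G (K.Pa.getVert k) →
      (j = k - 1 ∨ j = k ∨ j = k + 1) := by
    intro j hj hjS
    obtain ⟨j', hj', hj'3, hz⟩ := K.NS_int_char h0 hn hjS
    have : j = j' := K.inja hj hj' hz
    omega
  rcases Nat.lt_or_ge i k with hlt | hge
  · -- i < k - 1; go back to a, then edge to b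
    have hia : i < k - 1 := by omega
    have havoid : Avoid G (NS G (K.Pa.getVert k)) (K.Pa.getVert i) K.a := by
      refine avoid_prefix K.Pa hi ?_
      intro j hj hjS
      have := hchar j hj hjS
      omega
    have hanotin : K.a ∉ NS G (K.Pa.getVert k) := by
      intro h
      have := hchar 0 (by omega) (by rw [K.Pa.getVert_zero]; exact h)
      omega
    exact havoid.trans (Avoid.of_adj K.hab hanotin (K.b_notin_NSint h0 hn))
  · -- i > k + 1; go forward to e, then through Pb to b
    have hia : k + 1 < i := by omega
    have havoid : Avoid G (NS G (K.Pa.getVert k)) (K.Pa.getVert i) K.e := by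
      refine avoid_suffix K.Pa hi ?_
      intro j hj hjS
      have := hchar j hj hjS
      omega
    have henotin : K.e ∉ NS G (K.Pa.getVert k) := by
      intro h
      have := hchar K.Pa.length (le_refl _) (by rw [K.Pa.getVert_length]; exact h)
      omega
    exact havoid.trans (K.LB_int_Pb h0 hn K.Pb.end_mem_support henotin)

/-- LB with interior centre on `Pa`. -/
lemma LB_int_full (K : Core V G) {k : ℕ} (h0 : 0 < k) (hn : k < K.Pa.length) {x : V}
    (hxS : x ∉ NS G (K.Pa.getVert k)) :
    Avoid G (NS G (K.Pa.getVert k)) x K.b := by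
  rcases K.hcovV x with h | h | h | h
  · exact K.LB_int_Pa h0 hn h hxS
  · exact K.LB_int_Pb h0 hn h hxS
  · exact (K.LB_int_Pc h0 hn h hxS).trans
      (Avoid.of_adj K.hbc.symm (K.c_notin_NSint h0 hn) (K.b_notin_NSint h0 hn))
  · exact ((K.LB_int_Pd h0 hn h hxS).trans
      (Avoid.of_adj K.hcd.symm (K.d_notin_NSint h0 hn) (K.c_notin_NSint h0 hn))).trans
      (Avoid.of_adj K.hbc.symm (K.c_notin_NSint h0 hn) (K.b_notin_NSint h0 hn))

/-- LB for centres on `Pa`. -/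
lemma LB_Pa (K : Core V G) {v : V} (hv : v ∈ K.Pa.support) {x y : V}
    (hx : x ∉ NS G v) (hy : y ∉ NS G v) : Avoid G (NS G v) x y := by
  obtain ⟨k, hgk, hk⟩ := Walk.mem_support_iff_exists_getVert.1 hv
  subst hgk
  rcases Nat.eq_zero_or_pos k with h0 | h0
  · subst h0
    rw [K.Pa.getVert_zero] at hx hy ⊢
    exact (K.LB_a_full hx).trans (K.LB_a_full hy).symm
  rcases eq_or_lt_of_le hk with hn | hn
  · rw [hn, K.Pa.getVert_length] at hx hy ⊢
    exact (K.LB_e_full hx).trans (K.LB_e_full hy).symm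
  · exact (K.LB_int_full h0 hn hx).trans (K.LB_int_full h0 hn hy).symm

/-- Lemma B: the complement of any closed neighbourhood is `Avoid`-connected. -/
lemma LB (K : Core V G) {v x y : V} (hx : x ∉ NS G v) (hy : y ∉ NS G v) :
    Avoid G (NS G v) x y := by
  rcases K.hcovV v with h | h | h | h
  · exact K.LB_Pa h hx hy
  · exact K.rot.LB_Pa h hx hy
  · exact K.rot.rot.LB_Pa h hx hy
  · exact K.rot.rot.rot.LB_Pa h hx hy

/-- No star cutset. -/
lemma no_star_cutset (K : Core V G) : ¬ HasStarCutset G := by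
  rintro ⟨v, S, hvS, hstar, hpre⟩
  apply hpre
  rintro ⟨x, hx⟩ ⟨y, hy⟩
  have hSsub : S ⊆ NS G v := by
    intro z hz
    rcases hstar z hz with h | h
    · exact Or.inl h
    · exact Or.inr h
  have hxS : x ∉ S := hx
  have hyS : y ∉ S := hy
  -- move x off NS v
  have step : ∀ z : V, z ∉ S → ∃ z', Avoid G S z z' ∧ z' ∉ NS G v := by
    intro z hzS
    by_cases hzN : z ∈ NS G v
    · have hzv : z ≠ v := by
        rintro rfl
        exact hzS hvS
      obtain ⟨w, hadj, hwN⟩ := K.LA hzv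
      exact ⟨w, Avoid.of_adj hadj hzS (fun hw => hwN (hSsub hw)), hwN⟩
    · exact ⟨z, Avoid.refl hzS, hzN⟩
  obtain ⟨x', hxx', hx'⟩ := step x hxS
  obtain ⟨y', hyy', hy'⟩ := step y hyS
  have hmid : Avoid G S x' y' := (K.LB hx' hy').mono hSsub
  obtain ⟨w, hw⟩ := (hxx'.trans hmid).trans hyy'.symm
  exact avoid_reachable w hw hx hy

end Core

lemma IsPath.append_of_disjoint {u v w : V} {p : G.Walk u v} {q : G.Walk v w}
    (hp : p.IsPath) (hq : q.IsPath)
    (h : ∀ z, z ∈ p.support → z ∈ q.support → z = v) : (p.append q).IsPath := by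
  rw [Walk.isPath_def, Walk.support_append]
  refine List.Nodup.append hp.support_nodup (hq.support_nodup.tail) ?_
  intro z hz1 hz2
  have hzq : z ∈ q.support := List.mem_of_mem_tail hz2
  have hzv : z = v := h z hz1 hzq
  subst hzv
  have := hq.support_nodup
  rw [q.support_eq_cons] at this
  exact (List.nodup_cons.1 this).1 hz2

namespace Core

/-- The cycle `b — (Pa.reverse ∘ ...)`: `b → a → (Pa) → e → (Pb reversed) → b`. -/
def cycleAB (K : Core V G) : G.Walk K.b K.b :=
  Walk.cons K.hab.symm (K.Pa.append K.Pb.reverse)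

lemma cycleAB_isCycle (K : Core V G) : K.cycleAB.IsCycle := by
  rw [cycleAB, Walk.cons_isCycle_iff]
  constructor
  · refine IsPath.append_of_disjoint K.hPa K.hPb.reverse ?_
    intro z hz1 hz2
    rw [Walk.support_reverse, List.mem_reverse] at hz2
    exact K.dab z hz1 hz2
  · intro hmem
    rw [Walk.edges_append, List.mem_append] at hmem
    rcases hmem with hmem | hmem
    · exact K.b_notin_Pa (K.Pa.fst_mem_support_of_mem_edges hmem)
    · rw [Walk.edges_reverse, List.mem_reverse] at hmem
      exact K.a_notin_Pb (K.Pb.snd_mem_support_of_mem_edges hmem)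

lemma cycleAB_support (K : Core V G) {x : V} (hx : x ∈ K.cycleAB.support) :
    x = K.b ∨ x ∈ K.Pa.support ∨ x ∈ K.Pb.support := by
  rw [cycleAB, Walk.support_cons, List.mem_cons] at hx
  rcases hx with hx | hx
  · exact Or.inl hx
  rw [Walk.mem_support_append_iff] at hx
  rcases hx with hx | hx
  · exact Or.inr (Or.inl hx)
  · rw [Walk.support_reverse, List.mem_reverse] at hx
    exact Or.inr (Or.inr hx)

/-- The square cycle `a → b → c → d → a`. -/
def cycleSq (K : Core V G) : G.Walk K.a K.a :=
  Walk.cons K.hab (Walk.cons K.hbc (Walk.cons K.hcd (Walk.cons K.hda Walk.nil)))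

lemma cycleSq_isCycle (K : Core V G) : K.cycleSq.IsCycle := by
  have h : (Walk.cons K.hbc (Walk.cons K.hcd (Walk.cons K.hda Walk.nil)) :
      G.Walk K.b K.a).IsPath := by
    rw [Walk.isPath_def]
    simp [K.ne_bc, K.ne_bd, K.ne_ab.symm, K.ne_cd, K.ne_ac.symm, K.ne_ad.symm]
  rw [cycleSq, Walk.cons_isCycle_iff]
  refine ⟨h, ?_⟩
  intro hmem
  simp [Sym2.eq_iff, K.ne_ab, K.ne_ac, K.ne_ad, K.ne_bc, K.ne_bd, K.ne_cd] at hmem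

lemma cycleSq_support (K : Core V G) {x : V} (hx : x ∈ K.cycleSq.support) :
    x = K.a ∨ x = K.b ∨ x = K.c ∨ x = K.d := by
  simp only [cycleSq, Walk.support_cons, Walk.support_nil, List.mem_cons,
    List.mem_singleton, List.not_mem_nil, or_false] at hx
  tauto

/-- No vertex on all cycles. -/
lemma no_universal (K : Core V G) : ¬ HasUniversalCycleVertex G := by
  rintro ⟨x, hx⟩
  have h1 := K.cycleSq_support (hx _ K.cycleSq K.cycleSq_isCycle)
  have hAB := K.cycleAB_support (hx _ K.cycleAB K.cycleAB_isCycle)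
  have hCD := K.rot.rot.cycleAB_support (hx _ K.rot.rot.cycleAB K.rot.rot.cycleAB_isCycle)
  have hCD' : x = K.d ∨ x ∈ K.Pc.support ∨ x ∈ K.Pd.support := hCD
  rcases h1 with rfl | rfl | rfl | rfl
  · rcases hCD' with h | h | h
    · exact K.ne_ad h
    · exact K.a_notin_Pc h
    · exact K.a_notin_Pd h
  · rcases hCD' with h | h | h
    · exact K.ne_bd h
    · exact K.b_notin_Pc h
    · exact K.b_notin_Pd h
  · rcases hAB with h | h | h
    · exact K.ne_bc h.symm
    · exact K.c_notin_Pa h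
    · exact K.c_notin_Pb h
  · rcases hAB with h | h | h
    · exact K.ne_bd h.symm
    · exact K.d_notin_Pa h
    · exact K.d_notin_Pb h

/-- Minimum degree at least 2, for vertices of `Pa`. -/
lemma two_nbrs_Pa (K : Core V G) {x : V} (hx : x ∈ K.Pa.support) :
    ∃ p q, p ≠ q ∧ G.Adj x p ∧ G.Adj x q := by
  obtain ⟨i, hgi, hi⟩ := Walk.mem_support_iff_exists_getVert.1 hx
  subst hgi
  rcases Nat.eq_zero_or_pos i with h0 | h0
  · subst h0
    rw [K.Pa.getVert_zero]
    exact ⟨K.b, K.d, K.ne_bd, K.hab, K.hda.symm⟩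
  rcases eq_or_lt_of_le hi with hn | hn
  · rw [hn, K.Pa.getVert_length]
    refine ⟨K.Pa.getVert (K.Pa.length - 1), K.Pb.getVert (K.Pb.length - 1), ?_,
      K.adjE_penA.symm, K.adjE_penB.symm⟩
    intro h
    exact K.penA_ne_e (K.dab _ K.penA_mem (h ▸ K.penB_mem))
  · refine ⟨K.Pa.getVert (i - 1), K.Pa.getVert (i + 1), ?_, ?_, K.Pa.adj_getVert_succ hn⟩
    · intro h
      have := K.inja (i := i - 1) (j := i + 1) (by omega) (by omega) h
      omega
    · have h := K.Pa.adj_getVert_succ (i := i - 1) (by omega)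
      rw [show i - 1 + 1 = i by omega] at h
      exact h.symm

lemma two_nbrs (K : Core V G) (x : V) :
    ∃ p q, p ≠ q ∧ G.Adj x p ∧ G.Adj x q := by
  rcases K.hcovV x with h | h | h | h
  exacts [K.two_nbrs_Pa h, K.rot.two_nbrs_Pa h, K.rot.rot.two_nbrs_Pa h,
    K.rot.rot.rot.two_nbrs_Pa h]

end Core

end TypeACoreDev

/-- the subgraph `H` of a Type A subdivision of `K₅` consisting of the
non-subdivided 4-cycle `a b c d` together with the four paths joining `a, b, c, d` to `e`
has no star cutset, no vertex of degree at most 1, and no vertex lying on every cycle. -/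
theorem typeA_K5_core_graph (V : Type) (G : SimpleGraph V) (a b c d e : V)
    (hne : a ≠ b ∧ a ≠ c ∧ a ≠ d ∧ a ≠ e ∧ b ≠ c ∧ b ≠ d ∧ b ≠ e ∧ c ≠ d ∧ c ≠ e ∧ d ≠ e)
    (hab : G.Adj a b) (hbc : G.Adj b c) (hcd : G.Adj c d) (hda : G.Adj d a)
    (Pa : G.Walk a e) (Pb : G.Walk b e) (Pc : G.Walk c e) (Pd : G.Walk d e)
    (hPa : Pa.IsPath) (hPb : Pb.IsPath) (hPc : Pc.IsPath) (hPd : Pd.IsPath)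
    (hla : 2 ≤ Pa.length) (hlb : 2 ≤ Pb.length) (hlc : 2 ≤ Pc.length) (hld : 2 ≤ Pd.length)
    (dab : ∀ v, v ∈ Pa.support → v ∈ Pb.support → v = e)
    (dac : ∀ v, v ∈ Pa.support → v ∈ Pc.support → v = e)
    (dad : ∀ v, v ∈ Pa.support → v ∈ Pd.support → v = e)
    (dbc : ∀ v, v ∈ Pb.support → v ∈ Pc.support → v = e)
    (dbd : ∀ v, v ∈ Pb.support → v ∈ Pd.support → v = e)
    (dcd : ∀ v, v ∈ Pc.support → v ∈ Pd.support → v = e)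
    (hcovV : ∀ v : V, v ∈ Pa.support ∨ v ∈ Pb.support ∨ v ∈ Pc.support ∨ v ∈ Pd.support)
    (hcovE : ∀ u v, G.Adj u v → s(u, v) = s(a, b) ∨ s(u, v) = s(b, c) ∨ s(u, v) = s(c, d) ∨
      s(u, v) = s(d, a) ∨ s(u, v) ∈ Pa.edges ∨ s(u, v) ∈ Pb.edges ∨ s(u, v) ∈ Pc.edges ∨
      s(u, v) ∈ Pd.edges) :
    ¬ HasStarCutset G ∧ (∀ v : V, ∃ p q, p ≠ q ∧ G.Adj v p ∧ G.Adj v q) ∧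
      ¬ HasUniversalCycleVertex G := by
  obtain ⟨h1, h2, h3, h4, h5, h6, h7, h8, h9, h10⟩ := hne
  let K : Core V G := ⟨a, b, c, d, e, h1, h2, h3, h4, h5, h6, h7, h8, h9, h10,
    hab, hbc, hcd, hda, Pa, Pb, Pc, Pd, hPa, hPb, hPc, hPd, hla, hlb, hlc, hld,
    dab, dac, dad, dbc, dbd, dcd, hcovV, hcovE⟩
  exact ⟨K.no_star_cutset, K.two_nbrs, K.no_universal⟩

end BurlingFormal
end

section
/- A 2-necklace graph G is a chandelier only if its two beads share a common vertex; conversely, if the two beads of a 2-necklace share a common vertex, then G is a chandelier (i.e., there is a vertex contained in all cycles of G). -/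
namespace BurlingFormal

open SimpleGraph

private lemma support_getElem_eq_getVert {V : Type} {G : SimpleGraph V} {a b : V}
    (p : G.Walk a b) (k : ℕ) (h : k < p.support.length) : p.support[k] = p.getVert k := by
  induction p generalizing k with
  | nil =>
    simp only [Walk.support_nil, List.length_cons, List.length_nil] at h
    have : k = 0 := by omega
    subst this
    simp [Walk.getVert_zero]
  | cons h' q ih =>
    cases k with
    | zero => simp
    | succ k =>
      simp only [Walk.support_cons, List.getElem_cons_succ, Walk.getVert_cons_succ]
      exact ih k (by simpa [Walk.support_cons] using h)

private lemma edge_mem_of_getVert {V : Type} {G : SimpleGraph V} {a b : V}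
    (p : G.Walk a b) {i : ℕ} (hi : i < p.length) :
    s(p.getVert i, p.getVert (i + 1)) ∈ p.edges :=
  p.mem_edges_toSubgraph.mp (SimpleGraph.Subgraph.mem_edgeSet.mpr (p.toSubgraph_adj_getVert hi))

private lemma edge_decomp {V : Type} {G : SimpleGraph V} {a b u v : V}
    (p : G.Walk a b) (he : s(u, v) ∈ p.edges) :
    ∃ i, i < p.length ∧ ((p.getVert i = u ∧ p.getVert (i + 1) = v) ∨
      (p.getVert i = v ∧ p.getVert (i + 1) = u)) := by
  have hadj : p.toSubgraph.Adj u v :=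
    SimpleGraph.Subgraph.mem_edgeSet.mp (p.mem_edges_toSubgraph.mpr he)
  obtain ⟨i, hsym, hi⟩ := (p.toSubgraph_adj_iff).mp hadj
  rw [Sym2.eq_iff] at hsym
  exact ⟨i, hi, hsym⟩

private lemma cycle_two_edges {V : Type} {G : SimpleGraph V} {w v : V} {c : G.Walk w w}
    (hc : c.IsCycle) (hv : v ∈ c.support) :
    ∃ u₁ u₂, u₁ ≠ u₂ ∧ s(v, u₁) ∈ c.edges ∧ s(v, u₂) ∈ c.edges := by
  classical
  set c' := c.rotate v hv with hc'def
  have hc' : c'.IsCycle := hc.rotate hv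
  have h3 : 3 ≤ c'.length := hc'.three_le_length
  have hmem : ∀ e, e ∈ c'.edges → e ∈ c.edges := fun e he =>
    ((c.rotate_edges v hv).mem_iff).mp he
  have hslen : c'.support.length = c'.length + 1 := c'.length_support
  have htlen : c'.support.tail.length = c'.length := by
    rw [List.length_tail, hslen]
    omega
  refine ⟨c'.getVert 1, c'.getVert (c'.length - 1), ?_, ?_, ?_⟩
  · intro heq
    have e1 : c'.support.tail[0]'(by omega) = c'.getVert 1 := by
      rw [List.getElem_tail]
      exact support_getElem_eq_getVert c' 1 (by omega)
    have e2 : c'.support.tail[c'.length - 2]'(by omega) = c'.getVert (c'.length - 1) := by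
      rw [List.getElem_tail]
      rw [support_getElem_eq_getVert c' _ (by omega)]
      congr 1
      omega
    have : (0 : ℕ) = c'.length - 2 :=
      (hc'.support_nodup.getElem_inj_iff).mp (by rw [e1, e2, heq])
    omega
  · apply hmem
    have h0 : c'.getVert 0 = v := c'.getVert_zero
    have h1 := edge_mem_of_getVert c' (show 0 < c'.length by omega)
    rwa [h0] at h1
  · apply hmem
    have hL : c'.getVert c'.length = v := c'.getVert_length
    have h1 := edge_mem_of_getVert c' (show c'.length - 1 < c'.length by omega)
    rw [show c'.length - 1 + 1 = c'.length by omega, hL] at h1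
    rw [Sym2.eq_swap]
    exact h1

private lemma no_cycle_avoid {V : Type} {G : SimpleGraph V} (x : V) (f : V → V) (d : V → ℕ)
    (hP : ∀ u v, G.Adj u v → u ≠ x → v ≠ x →
      (f u = v ∧ d v < d u) ∨ (f v = u ∧ d u < d v))
    {w : V} (c : G.Walk w w) (hc : c.IsCycle) : x ∈ c.support := by
  classical
  by_contra hx
  obtain ⟨v, hv⟩ : ∃ v, v ∈ c.support.argmax d := by
    rcases hm : c.support.argmax d with _ | v
    · rw [List.argmax_eq_none] at hm
      exact absurd hm c.support_ne_nil
    · exact ⟨v, by simp [hm]⟩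
  have hvs : v ∈ c.support := List.argmax_mem hv
  obtain ⟨u₁, u₂, hu12, he₁, he₂⟩ := cycle_two_edges hc hvs
  have hs₁ : u₁ ∈ c.support := c.snd_mem_support_of_mem_edges he₁
  have hs₂ : u₂ ∈ c.support := c.snd_mem_support_of_mem_edges he₂
  have hd₁ : d u₁ ≤ d v := List.le_of_mem_argmax hs₁ hv
  have hd₂ : d u₂ ≤ d v := List.le_of_mem_argmax hs₂ hv
  have hK₁ := hP v u₁ (c.adj_of_mem_edges he₁) (fun h => hx (h ▸ hvs)) (fun h => hx (h ▸ hs₁))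
  have hK₂ := hP v u₂ (c.adj_of_mem_edges he₂) (fun h => hx (h ▸ hvs)) (fun h => hx (h ▸ hs₂))
  rcases hK₁ with ⟨hf₁, _⟩ | ⟨_, hlt⟩
  · rcases hK₂ with ⟨hf₂, _⟩ | ⟨_, hlt⟩
    · exact hu12 (hf₁.symm.trans hf₂)
    · omega
  · omega



private lemma core {V : Type} {G : SimpleGraph V} {x ai bj : V}
    (Bi : G.Walk ai ai) (Bj : G.Walk x x) (Pj : G.Walk bj ai)
    (hBi : Bi.IsCycle) (hBj : Bj.IsCycle) (hPj : Pj.IsPath)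
    (hxBi : x ∈ Bi.support) (hxai : x ≠ ai) (hbjx : bj ≠ x) (hbjBj : bj ∈ Bj.support)
    (D1 : ∀ v, v ∈ Bi.support → v ∈ Bj.support → v = x ∨ (v = bj ∧ v = ai))
    (D2 : ∀ v, v ∈ Pj.support → v ∈ Bi.support → v = bj ∨ v = ai)
    (D3 : ∀ v, v ∈ Pj.support → v ∈ Bj.support → v = bj ∨ v = ai)
    (cover : ∀ u v, G.Adj u v →
      s(u, v) ∈ Bi.edges ∨ s(u, v) ∈ Bj.edges ∨ s(u, v) ∈ Pj.edges)
    {w : V} (c : G.Walk w w) (hc : c.IsCycle) : x ∈ c.support := by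
  classical
  set TI := Bi.support.tail with hTIdef
  set TJ := Bj.support.tail with hTJdef
  set LP := Pj.support with hLPdef
  have hm3 : 3 ≤ Bi.length := hBi.three_le_length
  have hn3 : 3 ≤ Bj.length := hBj.three_le_length
  have hTIlen : TI.length = Bi.length := by
    rw [hTIdef, List.length_tail, Walk.length_support]
    omega
  have hTJlen : TJ.length = Bj.length := by
    rw [hTJdef, List.length_tail, Walk.length_support]
    omega
  have hLPlen : LP.length = Pj.length + 1 := by rw [hLPdef, Walk.length_support]
  have hTInd : TI.Nodup := hBi.support_nodup
  have hTJnd : TJ.Nodup := hBj.support_nodup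
  have hPnd : LP.Nodup := hPj.support_nodup
  -- getD accessors
  have hTIget : ∀ q, q < Bi.length → TI.getD q x = Bi.getVert (q + 1) := by
    intro q hq
    rw [hTIdef, List.getD_eq_getElem _ _ (show q < Bi.support.tail.length by
      rw [List.length_tail, Walk.length_support]; omega)]
    rw [List.getElem_tail]
    exact support_getElem_eq_getVert Bi (q + 1) (by rw [Walk.length_support]; omega)
  have hTJget : ∀ q, q < Bj.length → TJ.getD q x = Bj.getVert (q + 1) := by
    intro q hq
    rw [hTJdef, List.getD_eq_getElem _ _ (show q < Bj.support.tail.length by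
      rw [List.length_tail, Walk.length_support]; omega)]
    rw [List.getElem_tail]
    exact support_getElem_eq_getVert Bj (q + 1) (by rw [Walk.length_support]; omega)
  have hLPget : ∀ r, r ≤ Pj.length → LP.getD r x = Pj.getVert r := by
    intro r hr
    rw [hLPdef, List.getD_eq_getElem _ _ (show r < Pj.support.length by
      rw [Walk.length_support]; omega)]
    exact support_getElem_eq_getVert Pj r (by rw [Walk.length_support]; omega)
  -- membership
  have hgetmemI : ∀ q, q < Bi.length → Bi.getVert (q + 1) ∈ TI := by
    intro q hq
    rw [← hTIget q hq, List.getD_eq_getElem _ _ (show q < TI.length by omega)]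
    exact List.getElem_mem _
  have hgetmemJ : ∀ q, q < Bj.length → Bj.getVert (q + 1) ∈ TJ := by
    intro q hq
    rw [← hTJget q hq, List.getD_eq_getElem _ _ (show q < TJ.length by omega)]
    exact List.getElem_mem _
  have hgetmemP : ∀ r, r ≤ Pj.length → Pj.getVert r ∈ LP := by
    intro r hr
    rw [← hLPget r hr, List.getD_eq_getElem _ _ (show r < LP.length by omega)]
    exact List.getElem_mem _
  have haiTI : ai ∈ TI := by
    have h1 := hgetmemI (Bi.length - 1) (by omega)
    rwa [show Bi.length - 1 + 1 = Bi.length by omega, Walk.getVert_length] at h1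
  have hxTJlast : x ∈ TJ := by
    have h1 := hgetmemJ (Bj.length - 1) (by omega)
    rwa [show Bj.length - 1 + 1 = Bj.length by omega, Walk.getVert_length] at h1
  have hmemTI : ∀ v, v ∈ Bi.support ↔ v ∈ TI := by
    intro v
    constructor
    · intro hv
      rw [Walk.support_eq_cons] at hv
      rcases List.mem_cons.mp hv with rfl | hv
      · exact haiTI
      · exact hv
    · intro hv
      rw [hTIdef] at hv
      exact List.mem_of_mem_tail hv
  have hmemTJ : ∀ v, v ∈ Bj.support ↔ v ∈ TJ := by
    intro v
    constructor
    · intro hv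
      rw [Walk.support_eq_cons] at hv
      rcases List.mem_cons.mp hv with rfl | hv
      · exact hxTJlast
      · exact hv
    · intro hv
      rw [hTJdef] at hv
      exact List.mem_of_mem_tail hv
  -- index computations
  have hidxI : ∀ q, q < Bi.length → TI.idxOf (Bi.getVert (q + 1)) = q := by
    intro q hq
    have hmem : Bi.getVert (q + 1) ∈ TI := hgetmemI q hq
    have hlt : TI.idxOf (Bi.getVert (q + 1)) < TI.length := List.idxOf_lt_length_iff.mpr hmem
    have h1 : TI[TI.idxOf (Bi.getVert (q + 1))]'hlt = Bi.getVert (q + 1) :=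
      List.getElem_idxOf hlt
    have h2 : TI[q]'(by omega) = Bi.getVert (q + 1) :=
      (List.getD_eq_getElem TI x (show q < TI.length by omega)).symm.trans (hTIget q hq)
    exact (hTInd.getElem_inj_iff).mp (h1.trans h2.symm)
  have hidxJ : ∀ q, q < Bj.length → TJ.idxOf (Bj.getVert (q + 1)) = q := by
    intro q hq
    have hmem : Bj.getVert (q + 1) ∈ TJ := hgetmemJ q hq
    have hlt : TJ.idxOf (Bj.getVert (q + 1)) < TJ.length := List.idxOf_lt_length_iff.mpr hmem
    have h1 : TJ[TJ.idxOf (Bj.getVert (q + 1))]'hlt = Bj.getVert (q + 1) :=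
      List.getElem_idxOf hlt
    have h2 : TJ[q]'(by omega) = Bj.getVert (q + 1) :=
      (List.getD_eq_getElem TJ x (show q < TJ.length by omega)).symm.trans (hTJget q hq)
    exact (hTJnd.getElem_inj_iff).mp (h1.trans h2.symm)
  have hidxP : ∀ r, r ≤ Pj.length → LP.idxOf (Pj.getVert r) = r := by
    intro r hr
    have hmem : Pj.getVert r ∈ LP := hgetmemP r hr
    have hlt : LP.idxOf (Pj.getVert r) < LP.length := List.idxOf_lt_length_iff.mpr hmem
    have h1 : LP[LP.idxOf (Pj.getVert r)]'hlt = Pj.getVert r := List.getElem_idxOf hlt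
    have h2 : LP[r]'(by omega) = Pj.getVert r :=
      (List.getD_eq_getElem LP x (show r < LP.length by omega)).symm.trans (hLPget r hr)
    exact (hPnd.getElem_inj_iff).mp (h1.trans h2.symm)
  have hidxIai : TI.idxOf ai = Bi.length - 1 := by
    have h1 := hidxI (Bi.length - 1) (by omega)
    rwa [show Bi.length - 1 + 1 = Bi.length by omega, Walk.getVert_length] at h1
  set t := TI.idxOf x with htdef
  set s := TJ.idxOf bj with hsdef
  have hxTI : x ∈ TI := (hmemTI x).mp hxBi
  have htlt : t < Bi.length := by
    rw [htdef, ← hTIlen]; exact List.idxOf_lt_length_iff.mpr hxTI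
  have hxt : Bi.getVert (t + 1) = x := by
    rw [← hTIget t htlt, List.getD_eq_getElem _ _ (show t < TI.length by omega)]
    exact List.getElem_idxOf _
  have htne : t ≠ Bi.length - 1 := by
    intro h
    apply hxai
    rw [← hxt, h, show Bi.length - 1 + 1 = Bi.length by omega, Walk.getVert_length]
  have hbjTJ : bj ∈ TJ := (hmemTJ bj).mp hbjBj
  have hslt : s < Bj.length := by
    rw [hsdef, ← hTJlen]; exact List.idxOf_lt_length_iff.mpr hbjTJ
  have hbs : Bj.getVert (s + 1) = bj := by
    rw [← hTJget s hslt, List.getD_eq_getElem _ _ (show s < TJ.length by omega)]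
    exact List.getElem_idxOf _
  have hsne : s ≠ Bj.length - 1 := by
    intro h
    apply hbjx
    rw [← hbs, h, show Bj.length - 1 + 1 = Bj.length by omega, Walk.getVert_length]
  have hidxPbj : LP.idxOf bj = 0 := by
    have h1 := hidxP 0 (by omega)
    rwa [Walk.getVert_zero] at h1
  have hidxPai : LP.idxOf ai = Pj.length := by
    have h1 := hidxP Pj.length (le_refl _)
    rwa [Walk.getVert_length] at h1
  have hbjai : bj = ai → Pj.length = 0 := by
    intro h
    rw [h] at hidxPbj
    omega
  -- the potential and parent functions
  set d : V → ℕ := fun v =>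
    if v ∈ Bi.support then
      (if TI.idxOf v < t then TI.idxOf v + 1 else (Bi.length - 1) - TI.idxOf v)
    else if v ∈ LP then Pj.length - LP.idxOf v
    else Pj.length + (if TJ.idxOf v ≤ s then s - TJ.idxOf v else TJ.idxOf v - s)
    with hddef
  set f : V → V := fun v =>
    if v ∈ LP ∧ v ≠ ai then LP.getD (LP.idxOf v + 1) x
    else if v ∈ Bi.support then
      (if TI.idxOf v < t then (if TI.idxOf v = 0 then ai else TI.getD (TI.idxOf v - 1) x)
       else TI.getD (TI.idxOf v + 1) x)
    else (if TJ.idxOf v < s then TJ.getD (TJ.idxOf v + 1) x else TJ.getD (TJ.idxOf v - 1) x)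
    with hfdef
  -- d evaluations
  have hdI : ∀ q, q < Bi.length →
      d (Bi.getVert (q + 1)) = if q < t then q + 1 else (Bi.length - 1) - q := by
    intro q hq
    have hv : Bi.getVert (q + 1) ∈ Bi.support := (hmemTI _).mpr (hgetmemI q hq)
    simp only [hddef]
    rw [if_pos hv, hidxI q hq]
  have hdai : d ai = 0 := by
    have h1 := hdI (Bi.length - 1) (by omega)
    rw [show Bi.length - 1 + 1 = Bi.length by omega, Walk.getVert_length] at h1
    rw [h1, if_neg (by omega)]
    omega
  have hdJ : ∀ q, q < Bj.length - 1 →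
      d (Bj.getVert (q + 1)) = Pj.length + (if q ≤ s then s - q else q - s) := by
    intro q hq
    by_cases hvBi : Bj.getVert (q + 1) ∈ Bi.support
    · rcases D1 _ hvBi ((hmemTJ _).mpr (hgetmemJ q (by omega))) with hvx | ⟨hvbj, hvai⟩
      · exfalso
        have e1 := hidxJ q (by omega)
        rw [hvx] at e1
        have e2 := hidxJ (Bj.length - 1) (by omega)
        rw [show Bj.length - 1 + 1 = Bj.length by omega, Walk.getVert_length] at e2
        omega
      · have hqs : q = s := by
          have e1 := hidxJ q (by omega)
          rw [hvbj] at e1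
          omega
        have hL0 : Pj.length = 0 := hbjai (hvbj.symm.trans hvai)
        have hidx' : TI.idxOf (Bj.getVert (q + 1)) = Bi.length - 1 := by
          rw [hvai]; exact hidxIai
        simp only [hddef]
        rw [if_pos hvBi, hidx', if_neg (by omega)]
        split_ifs <;> omega
    · by_cases hvLP : Bj.getVert (q + 1) ∈ LP
      · rcases D3 _ hvLP ((hmemTJ _).mpr (hgetmemJ q (by omega))) with hvbj | hvai
        · have hqs : q = s := by
            have e1 := hidxJ q (by omega)
            rw [hvbj] at e1
            omega
          have hidx' : LP.idxOf (Bj.getVert (q + 1)) = 0 := by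
            rw [hvbj]; exact hidxPbj
          simp only [hddef]
          rw [if_neg hvBi, if_pos hvLP, hidx']
          split_ifs <;> omega
        · exfalso
          apply hvBi
          rw [hvai]
          exact Bi.start_mem_support
      · simp only [hddef]
        rw [if_neg hvBi, if_neg hvLP, hidxJ q (by omega)]
  have hdP : ∀ r, r ≤ Pj.length → d (Pj.getVert r) = Pj.length - r := by
    intro r hr
    by_cases hvBi : Pj.getVert r ∈ Bi.support
    · rcases D2 _ (hgetmemP r hr) hvBi with hvbj | hvai
      · have hr0 : r = 0 := by
          have e1 := hidxP r hr
          rw [hvbj] at e1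
          omega
        rcases D1 _ (hvbj ▸ hvBi) hbjBj with h | ⟨-, hba⟩
        · exact absurd h hbjx
        · have hL0 : Pj.length = 0 := hbjai hba
          have hidx' : TI.idxOf (Pj.getVert r) = Bi.length - 1 := by
            rw [hvbj, hba]; exact hidxIai
          simp only [hddef]
          rw [if_pos hvBi, hidx', if_neg (by omega)]
          omega
      · have hrL : r = Pj.length := by
          have e1 := hidxP r hr
          rw [hvai] at e1
          omega
        have hidx' : TI.idxOf (Pj.getVert r) = Bi.length - 1 := by
          rw [hvai]; exact hidxIai
        simp only [hddef]
        rw [if_pos hvBi, hidx', if_neg (by omega)]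
        omega
    · simp only [hddef]
      rw [if_neg hvBi, if_pos (hgetmemP r hr), hidxP r hr]
  -- f evaluations
  have hfI : ∀ v, v ∈ Bi.support → f v =
      (if TI.idxOf v < t then (if TI.idxOf v = 0 then ai else TI.getD (TI.idxOf v - 1) x)
       else TI.getD (TI.idxOf v + 1) x) := by
    intro v hv
    have hnot : ¬ (v ∈ LP ∧ v ≠ ai) := by
      rintro ⟨hvLP, hvai⟩
      rcases D2 v hvLP hv with h | h
      · rcases D1 v hv (h ▸ hbjBj) with h' | ⟨-, h'⟩
        · exact hbjx (h.symm.trans h')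
        · exact hvai h'
      · exact hvai h
    simp only [hfdef]
    rw [if_neg hnot, if_pos hv]
  have hfJ : ∀ v, v ∈ Bj.support → v ≠ x → v ≠ bj → v ≠ ai → f v =
      (if TJ.idxOf v < s then TJ.getD (TJ.idxOf v + 1) x
       else TJ.getD (TJ.idxOf v - 1) x) := by
    intro v hv hvx hvbj hvai
    have hnot1 : ¬ (v ∈ LP ∧ v ≠ ai) := by
      rintro ⟨hvLP, -⟩
      rcases D3 v hvLP hv with h | h
      · exact hvbj h
      · exact hvai h
    have hnot2 : v ∉ Bi.support := by
      intro hvBi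
      rcases D1 v hvBi hv with h | ⟨h, -⟩
      · exact hvx h
      · exact hvbj h
    simp only [hfdef]
    rw [if_neg hnot1, if_neg hnot2]
  have hfP : ∀ v, v ∈ LP → v ≠ ai → f v = LP.getD (LP.idxOf v + 1) x := by
    intro v hv hvai
    simp only [hfdef]
    rw [if_pos ⟨hv, hvai⟩]
  -- the three key lemmas
  have keyI : ∀ i, i < Bi.length → Bi.getVert i ≠ x → Bi.getVert (i + 1) ≠ x →
      (f (Bi.getVert i) = Bi.getVert (i + 1) ∧ d (Bi.getVert (i + 1)) < d (Bi.getVert i)) ∨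
      (f (Bi.getVert (i + 1)) = Bi.getVert i ∧ d (Bi.getVert i) < d (Bi.getVert (i + 1))) := by
    intro i hi hux hvx
    rcases Nat.eq_zero_or_pos i with rfl | hipos
    · have ht0 : t ≠ 0 := by
        intro h
        apply hvx
        rw [← hxt, h]
      have hvmem : Bi.getVert (0 + 1) ∈ Bi.support := (hmemTI _).mpr (hgetmemI 0 (by omega))
      refine Or.inr ⟨?_, ?_⟩
      · rw [Walk.getVert_zero, hfI _ hvmem, hidxI 0 (by omega), if_pos (by omega), if_pos rfl]
      · rw [Walk.getVert_zero, hdai, hdI 0 (by omega), if_pos (by omega)]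
        omega
    · have hu : Bi.getVert i = Bi.getVert ((i - 1) + 1) := by congr 1; omega
      have hiu : TI.idxOf (Bi.getVert i) = i - 1 := by
        rw [hu]; exact hidxI (i - 1) (by omega)
      have hiv : TI.idxOf (Bi.getVert (i + 1)) = i := hidxI i hi
      have humem : Bi.getVert i ∈ Bi.support := by
        rw [hu]; exact (hmemTI _).mpr (hgetmemI (i - 1) (by omega))
      have hvmem : Bi.getVert (i + 1) ∈ Bi.support := (hmemTI _).mpr (hgetmemI i hi)
      have hut : i - 1 ≠ t := by
        intro h
        apply hux
        rw [hu, h, hxt]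
      have hvt : i ≠ t := by
        intro h
        apply hvx
        rw [h, hxt]
      by_cases hit : i < t
      · refine Or.inr ⟨?_, ?_⟩
        · rw [hfI _ hvmem, hiv, if_pos hit, if_neg (by omega), hTIget (i - 1) (by omega)]
          exact hu.symm
        · rw [hu, hdI (i - 1) (by omega), hdI i hi, if_pos (by omega), if_pos hit]
          omega
      · refine Or.inl ⟨?_, ?_⟩
        · rw [hfI _ humem, hiu, if_neg (by omega), show i - 1 + 1 = i by omega,
            hTIget i hi]
        · rw [hu, hdI (i - 1) (by omega), hdI i hi, if_neg (by omega), if_neg (by omega)]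
          omega
  have keyJ : ∀ i, i < Bj.length → Bj.getVert i ≠ x → Bj.getVert (i + 1) ≠ x →
      (f (Bj.getVert i) = Bj.getVert (i + 1) ∧ d (Bj.getVert (i + 1)) < d (Bj.getVert i)) ∨
      (f (Bj.getVert (i + 1)) = Bj.getVert i ∧ d (Bj.getVert i) < d (Bj.getVert (i + 1))) := by
    intro i hi hux hvx
    have hipos : 1 ≤ i := by
      rcases Nat.eq_zero_or_pos i with rfl | h
      · exact absurd Bj.getVert_zero hux
      · exact h
    have hin : i + 1 ≠ Bj.length := by
      intro h
      apply hvx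
      rw [h, Walk.getVert_length]
    have hu : Bj.getVert i = Bj.getVert ((i - 1) + 1) := by congr 1; omega
    have hiu : TJ.idxOf (Bj.getVert i) = i - 1 := by
      rw [hu]; exact hidxJ (i - 1) (by omega)
    have hiv : TJ.idxOf (Bj.getVert (i + 1)) = i := hidxJ i hi
    have humem : Bj.getVert i ∈ Bj.support := by
      rw [hu]; exact (hmemTJ _).mpr (hgetmemJ (i - 1) (by omega))
    have hvmem : Bj.getVert (i + 1) ∈ Bj.support := (hmemTJ _).mpr (hgetmemJ i hi)
    have haiBj : ∀ v', v' ∈ Bj.support → v' ≠ bj → v' ≠ ai := by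
      intro v' hv' hvbj hvai
      rcases D1 ai Bi.start_mem_support (hvai ▸ hv') with h | ⟨h, -⟩
      · exact hxai h.symm
      · exact hvbj (hvai.trans h)
    by_cases his : i ≤ s
    · have hubj : Bj.getVert i ≠ bj := by
        intro h
        rw [h] at hiu
        omega
      have huai : Bj.getVert i ≠ ai := haiBj _ humem hubj
      refine Or.inl ⟨?_, ?_⟩
      · rw [hfJ _ humem hux hubj huai, hiu, if_pos (by omega),
          show i - 1 + 1 = i by omega, hTJget i (by omega)]
      · rw [hu, hdJ (i - 1) (by omega), hdJ i (by omega)]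
        split_ifs <;> omega
    · have hvbj : Bj.getVert (i + 1) ≠ bj := by
        intro h
        rw [h] at hiv
        omega
      have hvai : Bj.getVert (i + 1) ≠ ai := haiBj _ hvmem hvbj
      refine Or.inr ⟨?_, ?_⟩
      · rw [hfJ _ hvmem hvx hvbj hvai, hiv, if_neg (by omega), hTJget (i - 1) (by omega)]
        exact hu.symm
      · rw [hu, hdJ (i - 1) (by omega), hdJ i (by omega)]
        split_ifs <;> omega
  have keyP : ∀ i, i < Pj.length →
      (f (Pj.getVert i) = Pj.getVert (i + 1) ∧ d (Pj.getVert (i + 1)) < d (Pj.getVert i)) ∨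
      (f (Pj.getVert (i + 1)) = Pj.getVert i ∧ d (Pj.getVert i) < d (Pj.getVert (i + 1))) := by
    intro i hi
    have huai : Pj.getVert i ≠ ai := by
      intro h
      have e1 := hidxP i (by omega)
      rw [h] at e1
      omega
    refine Or.inl ⟨?_, ?_⟩
    · rw [hfP _ (hgetmemP i (by omega)) huai, hidxP i (by omega)]
      exact hLPget (i + 1) (by omega)
    · rw [hdP i (by omega), hdP (i + 1) (by omega)]
      omega
  -- assemble
  have hP : ∀ u v, G.Adj u v → u ≠ x → v ≠ x →
      (f u = v ∧ d v < d u) ∨ (f v = u ∧ d u < d v) := by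
    intro u v hadj hux hvx
    rcases cover u v hadj with he | he | he
    · obtain ⟨i, hi, hor⟩ := edge_decomp Bi he
      rcases hor with ⟨h1, h2⟩ | ⟨h1, h2⟩
      · subst h1; subst h2
        exact keyI i hi hux hvx
      · subst h1; subst h2
        exact (keyI i hi hvx hux).symm
    · obtain ⟨i, hi, hor⟩ := edge_decomp Bj he
      rcases hor with ⟨h1, h2⟩ | ⟨h1, h2⟩
      · subst h1; subst h2
        exact keyJ i hi hux hvx
      · subst h1; subst h2
        exact (keyJ i hi hvx hux).symm
    · obtain ⟨i, hi, hor⟩ := edge_decomp Pj he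
      rcases hor with ⟨h1, h2⟩ | ⟨h1, h2⟩
      · subst h1; subst h2
        exact keyP i hi
      · subst h1; subst h2
        exact (keyP i hi).symm
  exact no_cycle_avoid x f d hP c hc


/-- a 2-necklace is a chandelier (has a vertex on every cycle) iff its two
beads share a common vertex. -/
theorem twoNecklace_chandelier_iff (V : Type) (G : SimpleGraph V) (N : Necklace G 2) :
    HasUniversalCycleVertex G ↔ ∃ x, x ∈ (N.B 0).support ∧ x ∈ (N.B 1).support := by
  have zm : ∀ j : ZMod 2, j = 0 ∨ j = 1 := by decide
  constructor
  · rintro ⟨x, hx⟩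
    exact ⟨x, hx _ (N.B 0) (N.B_cycle 0), hx _ (N.B 1) (N.B_cycle 1)⟩
  · rintro ⟨v, h0, h1⟩
    have h01 : (0 : ZMod 2) ≠ 1 := by decide
    have h10 : (1 : ZMod 2) ≠ 0 := by decide
    have e11 : ((1 : ZMod 2) + 1) = 0 := by decide
    have e01 : ((0 : ZMod 2) + 1) = 1 := by decide
    rcases N.bead_disjoint 0 1 h01 v h0 h1 with ⟨-, hvb, hva⟩ | ⟨-, hvb, hva⟩
    · -- v = N.b 0 = N.a 1
      have hba : N.b 0 = N.a 1 := hvb.symm.trans hva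
      refine ⟨N.a 1, fun w c hcyc => ?_⟩
      refine core (N.B 0) (N.B 1) ((N.P 1).copy rfl (congrArg N.a e11))
        (N.B_cycle 0) (N.B_cycle 1) ((Walk.isPath_copy _ _ _).mpr (N.P_path 1))
        ?_ ?_ ?_ (N.b_mem 1) ?_ ?_ ?_ ?_ c hcyc
      · rw [← hba]; exact N.b_mem 0
      · intro h
        exact N.ab_ne 0 (by rw [hba]; exact h.symm)
      · exact fun h => N.ab_ne 1 h.symm
      · intro v' hvi hvj
        rcases N.bead_disjoint 0 1 h01 v' hvi hvj with ⟨-, h1', h2'⟩ | ⟨-, h1', h2'⟩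
        · exact Or.inl h2'
        · exact Or.inr ⟨h1', h2'⟩
      · intro v' hvP hvB
        rw [Walk.support_copy] at hvP
        rcases N.path_bead_disjoint 1 0 v' hvP hvB with h | h
        · exact Or.inl h
        · rw [e11] at h; exact Or.inr h
      · intro v' hvP hvB
        rw [Walk.support_copy] at hvP
        rcases N.path_bead_disjoint 1 1 v' hvP hvB with h | h
        · exact Or.inl h
        · rw [e11] at h; exact Or.inr h
      · intro u v' hadj
        rcases N.cover_edge u v' hadj with ⟨i, hi⟩ | ⟨i, hi⟩
        · rcases zm i with rfl | rfl
          · exact Or.inl hi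
          · exact Or.inr (Or.inl hi)
        · rcases zm i with rfl | rfl
          · exfalso
            have hnil : ((N.P 0).copy hba (congrArg N.a e01)) = Walk.nil :=
              Walk.isPath_iff_eq_nil.mp ((Walk.isPath_copy _ _ _).mpr (N.P_path 0))
            have he : s(u, v') ∈ ((N.P 0).copy hba (congrArg N.a e01)).edges := by
              rw [Walk.edges_copy]; exact hi
            rw [hnil] at he
            simp at he
          · refine Or.inr (Or.inr ?_)
            rw [Walk.edges_copy]
            exact hi
    · -- v = N.b 1 = N.a 0
      have hba : N.b 1 = N.a 0 := hvb.symm.trans hva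
      refine ⟨N.a 0, fun w c hcyc => ?_⟩
      refine core (N.B 1) (N.B 0) ((N.P 0).copy rfl (congrArg N.a e01))
        (N.B_cycle 1) (N.B_cycle 0) ((Walk.isPath_copy _ _ _).mpr (N.P_path 0))
        ?_ ?_ ?_ (N.b_mem 0) ?_ ?_ ?_ ?_ c hcyc
      · rw [← hba]; exact N.b_mem 1
      · intro h
        exact N.ab_ne 1 (by rw [hba]; exact h.symm)
      · exact fun h => N.ab_ne 0 h.symm
      · intro v' hvi hvj
        rcases N.bead_disjoint 1 0 h10 v' hvi hvj with ⟨-, h1', h2'⟩ | ⟨-, h1', h2'⟩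
        · exact Or.inl h2'
        · exact Or.inr ⟨h1', h2'⟩
      · intro v' hvP hvB
        rw [Walk.support_copy] at hvP
        rcases N.path_bead_disjoint 0 1 v' hvP hvB with h | h
        · exact Or.inl h
        · rw [e01] at h; exact Or.inr h
      · intro v' hvP hvB
        rw [Walk.support_copy] at hvP
        rcases N.path_bead_disjoint 0 0 v' hvP hvB with h | h
        · exact Or.inl h
        · rw [e01] at h; exact Or.inr h
      · intro u v' hadj
        rcases N.cover_edge u v' hadj with ⟨i, hi⟩ | ⟨i, hi⟩
        · rcases zm i with rfl | rfl
          · exact Or.inr (Or.inl hi)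
          · exact Or.inl hi
        · rcases zm i with rfl | rfl
          · refine Or.inr (Or.inr ?_)
            rw [Walk.edges_copy]
            exact hi
          · exfalso
            have hnil : ((N.P 1).copy hba (congrArg N.a e11)) = Walk.nil :=
              Walk.isPath_iff_eq_nil.mp ((Walk.isPath_copy _ _ _).mpr (N.P_path 1))
            have he : s(u, v') ∈ ((N.P 1).copy hba (congrArg N.a e11)).edges := by
              rw [Walk.edges_copy]; exact hi
            rw [hnil] at he
            simp at he


end BurlingFormal
end

section
/- Let G be an m-necklace with m ≥ 4, and suppose G is given an orientation in which every hole has exactly two sources and two sinks, where moreover in every hole three of these four extrema are consecutive vertices of the hole. Then a contradiction arises; hence no m-necklace with m ≥ 4 admits such an orientation. -/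
namespace BurlingFormal

open SimpleGraph

open Walk

section Aux


variable {V : Type} {G : SimpleGraph V}

lemma end_mem_tail_support' {u x : V} (p : G.Walk u x) (hp : p.length ≠ 0) :
    x ∈ p.support.tail := by
  cases p with
  | nil => simp at hp
  | cons h q => simp only [support_cons, List.tail_cons]; exact q.end_mem_support

lemma exists_incident_edge {v x : V} (c : G.Walk v v) (hc : c.IsCycle) (hx : x ∈ c.support) :
    ∃ y, s(x, y) ∈ c.edges := by
  have hlen : c.length ≠ 0 := by
    have := hc.three_le_length
    omega
  have hx' : x ∈ c.support.tail := by
    rcases List.mem_cons.mp (by rwa [c.support_eq_cons] at hx) with rfl | h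
    · exact end_mem_tail_support' c hlen
    · exact h
  rw [← c.map_snd_darts] at hx'
  obtain ⟨d, hd, rfl⟩ := List.mem_map.mp hx'
  refine ⟨d.fst, ?_⟩
  have : d.edge ∈ c.edges := List.mem_map_of_mem (f := Dart.edge) hd
  rwa [Dart.edge, Sym2.eq_swap] at this

lemma exists_half [DecidableEq V] {v w : V} (c : G.Walk v v) (hc : c.IsCycle)
    (hw : w ∈ c.support) (hwv : w ≠ v) (hnadj : ¬ G.Adj v w) (e : V) (he : e ∈ c.support) :
    ∃ Q : G.Walk v w, Q.IsPath ∧ (∀ x ∈ Q.support, x ∈ c.support) ∧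
      (∀ ed ∈ Q.edges, ed ∈ c.edges) ∧ e ∈ Q.support ∧
      (∀ x y, x ∈ Q.support → y ∈ Q.support → s(x, y) ∈ c.edges → s(x, y) ∈ Q.edges) := by
  set T := c.takeUntil w hw with hT
  set D := c.dropUntil w hw with hD
  have hspec : T.append D = c := c.take_spec hw
  have hsupp : c.support = T.support ++ D.support.tail := by rw [← hspec, support_append]
  have hedges : c.edges = T.edges ++ D.edges := by rw [← hspec, edges_append]
  have htl : c.support.tail = T.support.tail ++ D.support.tail := by
    rw [← hspec, tail_support_append]
  have hnd := hc.support_nodup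
  rw [htl] at hnd
  have hTt : T.support.tail.Nodup := hnd.of_append_left
  have hDt : D.support.tail.Nodup := hnd.of_append_right
  have hdisj : ∀ x, x ∈ T.support.tail → x ∈ D.support.tail → False := fun x h1 h2 =>
    (List.disjoint_of_nodup_append hnd) h1 h2
  have hTlen : T.length ≠ 0 := fun h => hwv (eq_of_length_eq_zero h).symm
  have hDlen : D.length ≠ 0 := fun h => hwv (eq_of_length_eq_zero h)
  have hwT : w ∈ T.support.tail := end_mem_tail_support' T hTlen
  have hvD : v ∈ D.support.tail := end_mem_tail_support' D hDlen
  have hTnodup : T.support.Nodup := by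
    rw [T.support_eq_cons]
    exact List.nodup_cons.mpr ⟨fun hvT => hdisj v hvT hvD, hTt⟩
  have hDnodup : D.support.Nodup := by
    rw [D.support_eq_cons]
    exact List.nodup_cons.mpr ⟨fun hwD => hdisj w hwT hwD, hDt⟩
  have hTpath : T.IsPath := ⟨hc.isCircuit.isTrail.takeUntil hw, hTnodup⟩
  have hDpath : D.IsPath := ⟨hc.isCircuit.isTrail.dropUntil hw, hDnodup⟩
  have hint : ∀ x, x ∈ T.support → x ∈ D.support → x = v ∨ x = w := by
    intro x hxT hxD
    rw [T.support_eq_cons] at hxT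
    rw [D.support_eq_cons] at hxD
    rcases List.mem_cons.mp hxT with rfl | hxT
    · exact Or.inl rfl
    rcases List.mem_cons.mp hxD with rfl | hxD
    · exact Or.inr rfl
    exact absurd (hdisj x hxT hxD) not_false
  have hadj_of_edge : ∀ x y : V, s(x, y) ∈ c.edges → G.Adj x y := fun x y h =>
    c.edges_subset_edgeSet h
  have hkey : ∀ x y : V, s(x, y) ∈ c.edges → x = v ∨ x = w → y = v ∨ y = w → False := by
    intro x y hedge hx hy
    have hxy : x ≠ y := (hadj_of_edge x y hedge).ne
    rcases hx with rfl | rfl <;> rcases hy with rfl | rfl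
    · exact hxy rfl
    · exact hnadj (hadj_of_edge _ _ hedge)
    · exact hnadj ((hadj_of_edge _ _ hedge).symm)
    · exact hxy rfl
  by_cases heT : e ∈ T.support
  · refine ⟨T, hTpath, fun x hx => c.support_takeUntil_subset hw hx,
      fun ed hed => c.edges_takeUntil_subset hw hed, heT, ?_⟩
    intro x y hx hy hedge
    rw [hedges] at hedge
    rcases List.mem_append.mp hedge with h | h
    · exact h
    · have hxD := fst_mem_support_of_mem_edges D h
      have hyD := snd_mem_support_of_mem_edges D h
      exact absurd (hkey x y (by rw [hedges]; exact hedge) (hint x hx hxD) (hint y hy hyD)) not_false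
  · have heD : e ∈ D.support := by
      rw [hsupp] at he
      rcases List.mem_append.mp he with h | h
      · exact absurd h heT
      · exact List.mem_of_mem_tail h
    refine ⟨D.reverse, hDpath.reverse, ?_, ?_, ?_, ?_⟩
    · intro x hx
      rw [support_reverse, List.mem_reverse] at hx
      exact c.support_dropUntil_subset hw hx
    · intro ed hed
      rw [edges_reverse, List.mem_reverse] at hed
      exact c.edges_dropUntil_subset hw hed
    · rwa [support_reverse, List.mem_reverse]
    · intro x y hx hy hedge
      rw [support_reverse, List.mem_reverse] at hx hy
      rw [edges_reverse, List.mem_reverse]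
      rw [hedges] at hedge
      rcases List.mem_append.mp hedge with h | h
      · have hxT := fst_mem_support_of_mem_edges T h
        have hyT := snd_mem_support_of_mem_edges T h
        exact absurd (hkey x y (by rw [hedges]; exact hedge) (hint x hxT hx) (hint y hyT hy)) not_false
      · exact h

def chainW {m : ℕ} (a b : ZMod m → V) (Q : ∀ i : ZMod m, G.Walk (a i) (b i))
    (P : ∀ i : ZMod m, G.Walk (b i) (a (i + 1))) : (n : ℕ) → G.Walk (a 0) (a (n : ZMod m))
  | 0 => Walk.nil.copy rfl (congrArg a (by push_cast; ring))
  | n + 1 => (chainW a b Q P n).append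
      (((Q n).append (P n)).copy rfl (congrArg a (by push_cast; ring)))

lemma support_chainW {m : ℕ} (a b : ZMod m → V) (Q : ∀ i : ZMod m, G.Walk (a i) (b i))
    (P : ∀ i : ZMod m, G.Walk (b i) (a (i + 1))) (n : ℕ) :
    (chainW a b Q P n).support =
      a 0 :: (List.range n).flatMap
        (fun (k : ℕ) => (Q (k : ZMod m)).support.tail ++ (P (k : ZMod m)).support.tail) := by
  induction n with
  | zero => simp [chainW]
  | succ n ih =>
      rw [chainW, support_append, ih, support_copy, tail_support_append,
        List.range_succ, List.flatMap_append]
      simp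

lemma edges_chainW {m : ℕ} (a b : ZMod m → V) (Q : ∀ i : ZMod m, G.Walk (a i) (b i))
    (P : ∀ i : ZMod m, G.Walk (b i) (a (i + 1))) (n : ℕ) :
    (chainW a b Q P n).edges =
      (List.range n).flatMap
        (fun (k : ℕ) => (Q (k : ZMod m)).edges ++ (P (k : ZMod m)).edges) := by
  induction n with
  | zero => simp [chainW]
  | succ n ih =>
      rw [chainW, edges_append, ih, edges_copy, edges_append, List.range_succ,
        List.flatMap_append]
      simp

lemma length_chainW {m : ℕ} (a b : ZMod m → V) (Q : ∀ i : ZMod m, G.Walk (a i) (b i))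
    (P : ∀ i : ZMod m, G.Walk (b i) (a (i + 1))) (hQ : ∀ i, 1 ≤ (Q i).length) (n : ℕ) :
    n ≤ (chainW a b Q P n).length := by
  induction n with
  | zero => simp
  | succ n ih =>
      rw [chainW, length_append, length_copy, length_append]
      have := hQ (n : ZMod m)
      omega

end Aux

/-- an `m`-necklace with `m ≥ 4` admits no orientation in which every hole has
exactly two sources and two sinks with three of these four extrema consecutive. -/
theorem necklace_orientation_contradiction (V : Type) (G : SimpleGraph V) (m : ℕ)
    (N : Necklace G m) (hm : 4 ≤ m) (A : V → V → Prop) (hA : IsOrientation G A)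
    (hholes : ∀ (v : V) (c : G.Walk v v), IsHole G c → TwoSourcesTwoSinks A c ∧
      ∃ x y z, x ≠ y ∧ y ≠ z ∧ x ≠ z ∧ IsHoleExtremum A c x ∧ IsHoleExtremum A c y ∧
        IsHoleExtremum A c z ∧ s(x, y) ∈ c.edges ∧ s(y, z) ∈ c.edges) :
    False := by
  classical
  haveI : NeZero m := ⟨by omega⟩
  -- basic ZMod facts
  have haddk : ∀ (i : ZMod m) (k : ℕ), 0 < k → k < m → i + (k : ZMod m) ≠ i := by
    intro i k h1 h2 h
    have h3 : ((k : ℕ) : ZMod m) = 0 := add_eq_left.mp h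
    rw [ZMod.natCast_eq_zero_iff] at h3
    exact absurd (Nat.le_of_dvd h1 h3) (by omega)
  have hone : ∀ i : ZMod m, i + 1 ≠ i := by
    intro i h
    exact haddk i 1 one_pos (by omega) (by rwa [Nat.cast_one])
  have hcastinj : ∀ k l : ℕ, k < m → l < m → k ≠ l → ((k : ZMod m) ≠ (l : ZMod m)) := by
    intro k l hk hl hkl h
    have := congrArg ZMod.val h
    rw [ZMod.val_natCast_of_lt hk, ZMod.val_natCast_of_lt hl] at this
    exact hkl this
  have hvalcast : ∀ j : ZMod m, ((j.val : ℕ) : ZMod m) = j := fun j => by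
    simp [ZMod.natCast_val, ZMod.cast_id]
  -- membership helpers
  have H1 : ∀ i j : ZMod m, i ≠ j → ∀ x, x ∈ (N.B i).support → x ∈ (N.B j).support →
      x = N.a i ∨ x = N.b i := by
    intro i j hij x h1 h2
    rcases N.bead_disjoint i j hij x h1 h2 with ⟨_, h, _⟩ | ⟨_, _, h⟩
    · exact Or.inr h
    · exact Or.inl h
  have H2 : ∀ i j : ZMod m, ∀ x, x ∈ (N.B i).support → x ∈ (N.P j).support →
      x = N.a i ∨ x = N.b i := by
    intro i j x hBi hPj
    rcases N.path_bead_disjoint j i x hPj hBi with h | h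
    · by_cases hji : i = j
      · exact Or.inr (by rw [h, hji])
      · exact H1 i j hji x hBi (by rw [h]; exact N.b_mem j)
    · by_cases hji : i = j + 1
      · exact Or.inl (by rw [h, ← hji])
      · exact H1 i (j + 1) hji x hBi (by rw [h]; exact (N.B (j + 1)).start_mem_support)
  have K0 : ∀ i j : ZMod m, i ≠ j → ∀ x, x ∈ (N.B i).support → x ≠ N.a i →
      x ∈ (N.B j).support → x ≠ N.a j → False := by
    intro i j hij x hBi hai hBj haj
    rcases N.bead_disjoint i j hij x hBi hBj with ⟨_, _, h⟩ | ⟨_, _, h⟩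
    · exact haj h
    · exact hai h
  have K1 : ∀ i j : ZMod m, ∀ x, x ∈ (N.B i).support → x ≠ N.a i →
      x ∈ (N.P j).support → x ≠ N.b j → False := by
    intro i j x hBi hai hPj hbj
    have hbi : x = N.b i := (H2 i j x hBi hPj).resolve_left hai
    have hx1 : x = N.a (j + 1) := (N.path_bead_disjoint j i x hPj hBi).resolve_left hbj
    by_cases hji : j + 1 = i
    · exact hai (by rw [hx1, hji])
    · have hxB : x ∈ (N.B (j + 1)).support := by
        rw [hx1]; exact (N.B (j + 1)).start_mem_support
      rcases N.bead_disjoint (j + 1) i hji x hxB hBi with ⟨_, _, h⟩ | ⟨hj1, h, _⟩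
      · exact hai h
      · have hji2 : j = i := add_right_cancel hj1
        exact hbj (by rw [hji2]; exact hbi)
  have K2 : ∀ i j : ZMod m, i ≠ j → ∀ x, x ∈ (N.P i).support → x ≠ N.b i →
      x ∈ (N.P j).support → x ≠ N.b j → False := by
    intro i j hij x hPi hbi hPj hbj
    obtain ⟨h1, h2⟩ := N.path_disjoint i j hij x hPi hPj
    have ha1 : x = N.a (i + 1) := h1.resolve_left hbi
    have ha2 : x = N.a (j + 1) := h2.resolve_left hbj
    have hne : i + 1 ≠ j + 1 := fun h => hij (add_right_cancel h)
    have hm1 : x ∈ (N.B (i + 1)).support := by rw [ha1]; exact (N.B _).start_mem_support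
    have hm2 : x ∈ (N.B (j + 1)).support := by rw [ha2]; exact (N.B _).start_mem_support
    rcases N.bead_disjoint (i + 1) (j + 1) hne x hm1 hm2 with ⟨_, h, _⟩ | ⟨_, h, _⟩
    · exact N.ab_ne (i + 1) (ha1.symm.trans h)
    · exact N.ab_ne (j + 1) (ha2.symm.trans h)
  have BB : ∀ i j : ZMod m, i ≠ j → ∀ x y, G.Adj x y → x ∈ (N.B i).support →
      y ∈ (N.B i).support → x ∈ (N.B j).support → y ∈ (N.B j).support → False := by
    intro i j hij x y hadj hxi hyi hxj hyj
    rcases N.bead_disjoint i j hij x hxi hxj with ⟨hc1, hx1, hx2⟩ | ⟨hc1, hx1, hx2⟩ <;>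
      rcases N.bead_disjoint i j hij y hyi hyj with ⟨hc2, hy1, hy2⟩ | ⟨hc2, hy1, hy2⟩
    · exact hadj.ne (hx1.trans hy1.symm)
    · exact haddk i 2 (by omega) (by omega) (by push_cast; linear_combination -hc1 - hc2)
    · exact haddk i 2 (by omega) (by omega) (by push_cast; linear_combination -hc1 - hc2)
    · exact hadj.ne (hx1.trans hy1.symm)
  have EPB : ∀ (i j : ZMod m) x y, G.Adj x y → x ∈ (N.B i).support → y ∈ (N.B i).support →
      s(x, y) ∈ (N.P j).edges → False := by
    intro i j x y hadj hxB hyB hP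
    have hxP : x ∈ (N.P j).support := (N.P j).fst_mem_support_of_mem_edges hP
    have hyP : y ∈ (N.P j).support := (N.P j).snd_mem_support_of_mem_edges hP
    have core : ∀ x y, G.Adj x y → x ∈ (N.B i).support → y ∈ (N.B i).support →
        x = N.b j → y = N.a (j + 1) → False := by
      intro x y hadj hxB hyB hx hy
      by_cases hij : i = j
      · subst hij
        have hyB' : y ∈ (N.B (i + 1)).support := by rw [hy]; exact (N.B _).start_mem_support
        rcases N.bead_disjoint (i + 1) i (hone i) y hyB' hyB with ⟨hc, _, _⟩ | ⟨_, hy1, _⟩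
        · exact haddk i 2 (by omega) (by omega) (by push_cast; linear_combination -hc)
        · exact hadj.ne (hx.trans hy1.symm)
      · rcases N.bead_disjoint j i (Ne.symm hij) x (by rw [hx]; exact N.b_mem j) hxB with
          ⟨hc, hx1, hx2⟩ | ⟨_, hx1, hx2⟩
        · have : y = x := by rw [hy, ← hc, ← hx2]
          exact hadj.ne this.symm
        · exact N.ab_ne j (hx2.symm.trans hx)
    rcases N.path_bead_disjoint j i x hxP hxB with hx | hx <;>
      rcases N.path_bead_disjoint j i y hyP hyB with hy | hy
    · exact hadj.ne (hx.trans hy.symm)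
    · exact core x y hadj hxB hyB hx hy
    · exact core y x hadj.symm hyB hxB hy hx
    · exact hadj.ne (hx.trans hy.symm)
  have EBB : ∀ i j : ZMod m, i ≠ j → ∀ x y, s(x, y) ∈ (N.B i).edges →
      s(x, y) ∈ (N.B j).edges → False := by
    intro i j hij x y h1 h2
    exact BB i j hij x y ((N.B i).edges_subset_edgeSet h1)
      ((N.B i).fst_mem_support_of_mem_edges h1) ((N.B i).snd_mem_support_of_mem_edges h1)
      ((N.B j).fst_mem_support_of_mem_edges h2) ((N.B j).snd_mem_support_of_mem_edges h2)
  have EK2 : ∀ i j : ZMod m, i ≠ j → ∀ x y, s(x, y) ∈ (N.P i).edges →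
      s(x, y) ∈ (N.P j).edges → False := by
    intro i j hij x y h1 h2
    have hadj : G.Adj x y := (N.P i).edges_subset_edgeSet h1
    have hx1 := N.path_disjoint i j hij x ((N.P i).fst_mem_support_of_mem_edges h1)
      ((N.P j).fst_mem_support_of_mem_edges h2)
    have hy1 := N.path_disjoint i j hij y ((N.P i).snd_mem_support_of_mem_edges h1)
      ((N.P j).snd_mem_support_of_mem_edges h2)
    have hC : ∀ u, (u = N.b i ∨ u = N.a (i + 1)) → (u = N.b j ∨ u = N.a (j + 1)) →
        (u = N.b i ∧ u = N.a (j + 1)) ∨ (u = N.a (i + 1) ∧ u = N.b j) := by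
      intro u hu1 hu2
      rcases hu1 with hu1 | hu1 <;> rcases hu2 with hu2 | hu2
      · exfalso
        rcases N.bead_disjoint i j hij u (by rw [hu1]; exact N.b_mem i)
          (by rw [hu2]; exact N.b_mem j) with ⟨_, h, h'⟩ | ⟨_, h, h'⟩
        · exact N.ab_ne j (h'.symm.trans hu2)
        · exact N.ab_ne i (h'.symm.trans hu1)
      · exact Or.inl ⟨hu1, hu2⟩
      · exact Or.inr ⟨hu1, hu2⟩
      · exfalso
        have hne2 : i + 1 ≠ j + 1 := fun h => hij (add_right_cancel h)
        rcases N.bead_disjoint (i + 1) (j + 1) hne2 u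
          (by rw [hu1]; exact (N.B _).start_mem_support)
          (by rw [hu2]; exact (N.B _).start_mem_support) with ⟨_, h, _⟩ | ⟨_, h, _⟩
        · exact N.ab_ne (i + 1) (hu1.symm.trans h)
        · exact N.ab_ne (j + 1) (hu2.symm.trans h)
    have hmix : ∀ u, u = N.b i → u = N.a (j + 1) → False := by
      intro u hua hub
      by_cases hij2 : i = j + 1
      · rw [← hij2] at hub
        exact N.ab_ne i (hub.symm.trans hua)
      · rcases N.bead_disjoint i (j + 1) hij2 u (by rw [hua]; exact N.b_mem i)
          (by rw [hub]; exact (N.B _).start_mem_support) with ⟨hc, h, h'⟩ | ⟨_, h, h'⟩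
        · exact hij (add_right_cancel hc).symm
        · exact N.ab_ne i (h'.symm.trans hua)
    rcases hC x hx1.1 hx1.2 with ⟨hxa, hxb⟩ | ⟨hxa, hxb⟩ <;>
      rcases hC y hy1.1 hy1.2 with ⟨hya, hyb⟩ | ⟨hya, hyb⟩
    · exact hadj.ne (hxa.trans hya.symm)
    · exact hmix x hxa hxb
    · exact hmix y hya hyb
    · exact hadj.ne (hxa.trans hya.symm)
  -- beads are holes
  have hole_B : ∀ i : ZMod m, IsHole G (N.B i) := by
    intro i
    refine ⟨⟨N.B_cycle i, ?_⟩, N.B_len i⟩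
    intro x y hx hy hadj
    rcases N.cover_edge x y hadj with ⟨j, hj⟩ | ⟨j, hj⟩
    · by_cases hij : j = i
      · exact hij ▸ hj
      · exact absurd (BB i j (Ne.symm hij) x y hadj hx hy
          ((N.B j).fst_mem_support_of_mem_edges hj)
          ((N.B j).snd_mem_support_of_mem_edges hj)) not_false
    · exact absurd (EPB i j x y hadj hx hy hj) not_false
  -- no vertex is both a source and a sink of a cycle
  have hns : ∀ (v : V) (c : G.Walk v v), c.IsCycle → ∀ x, IsHoleSource A c x →
      IsHoleSink A c x → False := by
    intro v c hc x hsrc hsink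
    obtain ⟨y, hy⟩ := exists_incident_edge c hc hsrc.1
    have hadj : G.Adj x y := c.edges_subset_edgeSet hy
    exact (hA.2 x y hadj).mp (hsrc.2 y hy) (hsink.2 y hy)
  -- choose an extremum of each bead avoiding a i, b i
  have hsel : ∀ i : ZMod m, ∃ e : V,
      (IsHoleSource A (N.B i) e ∨ IsHoleSink A (N.B i) e) ∧ e ≠ N.a i ∧ e ≠ N.b i := by
    intro i
    obtain ⟨⟨s₁, s₂, hs12, hs1, hs2, _⟩, ⟨t₁, t₂, ht12, ht1, ht2, _⟩⟩ :=
      (hholes _ (N.B i) (hole_B i)).1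
    by_cases h1 : s₁ ≠ N.a i ∧ s₁ ≠ N.b i
    · exact ⟨s₁, Or.inl hs1, h1⟩
    by_cases h2 : s₂ ≠ N.a i ∧ s₂ ≠ N.b i
    · exact ⟨s₂, Or.inl hs2, h2⟩
    by_cases h3 : t₁ ≠ N.a i ∧ t₁ ≠ N.b i
    · exact ⟨t₁, Or.inr ht1, h3⟩
    exfalso
    have hor : ∀ u : V, ¬(u ≠ N.a i ∧ u ≠ N.b i) → u = N.a i ∨ u = N.b i := by
      intro u hu
      by_cases h : u = N.a i
      · exact Or.inl h
      · push_neg at hu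
        exact Or.inr (hu h)
    have e1 := hor s₁ h1
    have e2 := hor s₂ h2
    have e3 := hor t₁ h3
    have hst : ∀ s t, IsHoleSource A (N.B i) s → IsHoleSink A (N.B i) t → s ≠ t := by
      intro s t hs ht h
      exact hns _ _ (N.B_cycle i) s hs (by rw [h]; exact ht)
    rcases e1 with f1 | f1 <;> rcases e2 with f2 | f2
    · exact hs12 (f1.trans f2.symm)
    · rcases e3 with f3 | f3
      · exact hst s₁ t₁ hs1 ht1 (f1.trans f3.symm)
      · exact hst s₂ t₁ hs2 ht1 (f2.trans f3.symm)
    · rcases e3 with f3 | f3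
      · exact hst s₂ t₁ hs2 ht1 (f2.trans f3.symm)
      · exact hst s₁ t₁ hs1 ht1 (f1.trans f3.symm)
    · exact hs12 (f1.trans f2.symm)
  choose e he_ext he_na he_nb using hsel
  have hei_mem : ∀ i : ZMod m, e i ∈ (N.B i).support := by
    intro i
    rcases he_ext i with h | h
    · exact h.1
    · exact h.1
  -- choose the half of each bead containing the chosen extremum
  have hsel2 : ∀ i : ZMod m, ∃ Qi : G.Walk (N.a i) (N.b i), Qi.IsPath ∧
      (∀ x ∈ Qi.support, x ∈ (N.B i).support) ∧ (∀ ed ∈ Qi.edges, ed ∈ (N.B i).edges) ∧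
      e i ∈ Qi.support ∧
      (∀ x y, x ∈ Qi.support → y ∈ Qi.support → s(x, y) ∈ (N.B i).edges →
        s(x, y) ∈ Qi.edges) :=
    fun i => exists_half (N.B i) (N.B_cycle i) (N.b_mem i) (Ne.symm (N.ab_ne i))
      (N.ab_nonadj i) (e i) (hei_mem i)
  choose Q hQpath hQsub hQedge hQe hQchord using hsel2
  have hQlen : ∀ i, 1 ≤ (Q i).length := fun i =>
    Nat.one_le_iff_ne_zero.mpr fun h => N.ab_ne i (Walk.eq_of_length_eq_zero h)
  -- tail membership helpers
  have hmemQ : ∀ (k : ZMod m) x, x ∈ (Q k).support.tail → x ∈ (N.B k).support ∧ x ≠ N.a k := by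
    intro k x hx
    refine ⟨hQsub k x (List.mem_of_mem_tail hx), fun h => ?_⟩
    have hnd := (hQpath k).support_nodup
    rw [(Q k).support_eq_cons] at hnd
    exact (List.nodup_cons.mp hnd).1 (h ▸ hx)
  have hmemP : ∀ (k : ZMod m) x, x ∈ (N.P k).support.tail →
      x ∈ (N.P k).support ∧ x ≠ N.b k := by
    intro k x hx
    refine ⟨List.mem_of_mem_tail hx, fun h => ?_⟩
    have hnd := (N.P_path k).support_nodup
    rw [(N.P k).support_eq_cons] at hnd
    exact (List.nodup_cons.mp hnd).1 (h ▸ hx)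
  have hseg : ∀ k l : ZMod m, k ≠ l → ∀ x,
      (x ∈ (Q k).support.tail ∨ x ∈ (N.P k).support.tail) →
      (x ∈ (Q l).support.tail ∨ x ∈ (N.P l).support.tail) → False := by
    intro k l hkl x hx hy
    rcases hx with hx | hx <;> rcases hy with hy | hy
    · obtain ⟨h1, h2⟩ := hmemQ k x hx
      obtain ⟨h3, h4⟩ := hmemQ l x hy
      exact K0 k l hkl x h1 h2 h3 h4
    · obtain ⟨h1, h2⟩ := hmemQ k x hx
      obtain ⟨h3, h4⟩ := hmemP l x hy
      exact K1 k l x h1 h2 h3 h4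
    · obtain ⟨h1, h2⟩ := hmemP k x hx
      obtain ⟨h3, h4⟩ := hmemQ l x hy
      exact K1 l k x h3 h4 h1 h2
    · obtain ⟨h1, h2⟩ := hmemP k x hx
      obtain ⟨h3, h4⟩ := hmemP l x hy
      exact K2 k l hkl x h1 h2 h3 h4
  -- the big cycle
  set C0 : G.Walk (N.a 0) (N.a ((m : ℕ) : ZMod m)) := chainW N.a N.b Q N.P m with hC0
  set C : G.Walk (N.a 0) (N.a 0) := C0.copy rfl (congrArg N.a (ZMod.natCast_self m)) with hC
  have hCsupp : C.support = N.a 0 :: (List.range m).flatMap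
      (fun (k : ℕ) => (Q (k : ZMod m)).support.tail ++ (N.P (k : ZMod m)).support.tail) := by
    rw [hC, Walk.support_copy, hC0, support_chainW]
  have hCedges : C.edges = (List.range m).flatMap
      (fun (k : ℕ) => (Q (k : ZMod m)).edges ++ (N.P (k : ZMod m)).edges) := by
    rw [hC, Walk.edges_copy, hC0, edges_chainW]
  have hClen : 4 ≤ C.length := by
    rw [hC, Walk.length_copy, hC0]
    exact le_trans hm (length_chainW _ _ _ _ hQlen m)
  have hedge_ofQ : ∀ (j : ZMod m) ed, ed ∈ (Q j).edges → ed ∈ C.edges := by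
    intro j ed hed
    rw [hCedges]
    exact List.mem_flatMap.mpr ⟨j.val, List.mem_range.mpr (ZMod.val_lt j),
      List.mem_append.mpr (Or.inl (by rw [hvalcast j]; exact hed))⟩
  have hedge_ofP : ∀ (j : ZMod m) ed, ed ∈ (N.P j).edges → ed ∈ C.edges := by
    intro j ed hed
    rw [hCedges]
    exact List.mem_flatMap.mpr ⟨j.val, List.mem_range.mpr (ZMod.val_lt j),
      List.mem_append.mpr (Or.inr (by rw [hvalcast j]; exact hed))⟩
  -- C is a cycle
  have hCtrail : C.edges.Nodup := by
    rw [hCedges, List.nodup_flatMap]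
    constructor
    · intro k _
      refine List.Nodup.append (hQpath _).isTrail.edges_nodup
        ((N.P_path _).isTrail.edges_nodup) ?_
      intro ed h1 h2
      revert h1 h2
      induction ed using Sym2.ind with
      | _ x y =>
        intro h1 h2
        have hB := hQedge _ _ h1
        exact EPB _ _ x y ((N.B _).edges_subset_edgeSet hB)
          ((N.B _).fst_mem_support_of_mem_edges hB)
          ((N.B _).snd_mem_support_of_mem_edges hB) h2
    · refine (List.pairwise_lt_range (n := m)).imp_of_mem ?_
      intro k l hk hl hkl
      have hne : ((k : ZMod m)) ≠ ((l : ZMod m)) :=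
        hcastinj k l (List.mem_range.mp hk) (List.mem_range.mp hl) (Nat.ne_of_lt hkl)
      intro ed h1 h2
      revert h1 h2
      induction ed using Sym2.ind with
      | _ x y =>
        intro h1 h2
        rcases List.mem_append.mp h1 with h1 | h1 <;> rcases List.mem_append.mp h2 with h2 | h2
        · exact EBB _ _ hne x y (hQedge _ _ h1) (hQedge _ _ h2)
        · have hB := hQedge _ _ h1
          exact EPB _ _ x y ((N.B _).edges_subset_edgeSet hB)
            ((N.B _).fst_mem_support_of_mem_edges hB)
            ((N.B _).snd_mem_support_of_mem_edges hB) h2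
        · have hB := hQedge _ _ h2
          exact EPB _ _ x y ((N.B _).edges_subset_edgeSet hB)
            ((N.B _).fst_mem_support_of_mem_edges hB)
            ((N.B _).snd_mem_support_of_mem_edges hB) h1
        · exact EK2 _ _ hne x y h1 h2
  have hCtail : C.support.tail.Nodup := by
    have ht : C.support.tail = (List.range m).flatMap
        (fun (k : ℕ) => (Q (k : ZMod m)).support.tail ++ (N.P (k : ZMod m)).support.tail) := by
      rw [hCsupp]; rfl
    rw [ht, List.nodup_flatMap]
    constructor
    · intro k _
      refine List.Nodup.append ((hQpath _).support_nodup).tail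
        ((N.P_path _).support_nodup).tail ?_
      intro x h1 h2
      obtain ⟨hB, ha⟩ := hmemQ _ x h1
      obtain ⟨hP, hb⟩ := hmemP _ x h2
      exact K1 _ _ x hB ha hP hb
    · refine (List.pairwise_lt_range (n := m)).imp_of_mem ?_
      intro k l hk hl hkl
      have hne : ((k : ZMod m)) ≠ ((l : ZMod m)) :=
        hcastinj k l (List.mem_range.mp hk) (List.mem_range.mp hl) (Nat.ne_of_lt hkl)
      intro x h1 h2
      exact hseg _ _ hne x (List.mem_append.mp h1) (List.mem_append.mp h2)
  have hCcycle : C.IsCycle := by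
    rw [Walk.isCycle_def]
    refine ⟨⟨hCtrail⟩, ?_, hCtail⟩
    intro h
    rw [h] at hClen
    simp at hClen
  -- C is chordless
  have hBQ : ∀ (j : ZMod m) x, x ∈ C.support → x ∈ (N.B j).support → x ∈ (Q j).support := by
    intro j x hxC hxB
    rw [hCsupp] at hxC
    rcases List.mem_cons.mp hxC with h | h
    · by_cases hj : j = (0 : ZMod m)
      · subst hj
        rw [h]
        exact (Q (0 : ZMod m)).start_mem_support
      · have h0 : x ∈ (N.B (0 : ZMod m)).support := by
          rw [h]; exact (N.B (0 : ZMod m)).start_mem_support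
        rcases H1 j 0 hj x hxB h0 with h' | h'
        · rw [h']; exact (Q j).start_mem_support
        · rw [h']; exact (Q j).end_mem_support
    · obtain ⟨k, hk, hsg⟩ := List.mem_flatMap.mp h
      rcases List.mem_append.mp hsg with hq | hp
      · by_cases hkj : ((k : ZMod m)) = j
        · rw [← hkj]
          exact List.mem_of_mem_tail hq
        · obtain ⟨hB, _⟩ := hmemQ _ x hq
          rcases H1 j _ (Ne.symm hkj) x hxB hB with h' | h'
          · rw [h']; exact (Q j).start_mem_support
          · rw [h']; exact (Q j).end_mem_support
      · have hPm := List.mem_of_mem_tail hp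
        rcases H2 j _ x hxB hPm with h' | h'
        · rw [h']; exact (Q j).start_mem_support
        · rw [h']; exact (Q j).end_mem_support
  have hchordC : ∀ x y, x ∈ C.support → y ∈ C.support → G.Adj x y → s(x, y) ∈ C.edges := by
    intro x y hx hy hadj
    rcases N.cover_edge x y hadj with ⟨j, hj⟩ | ⟨j, hj⟩
    · have hxQ := hBQ j x hx ((N.B j).fst_mem_support_of_mem_edges hj)
      have hyQ := hBQ j y hy ((N.B j).snd_mem_support_of_mem_edges hj)
      exact hedge_ofQ j _ (hQchord j x y hxQ hyQ hj)
    · exact hedge_ofP j _ hj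
  have hole_C : IsHole G C := ⟨⟨hCcycle, hchordC⟩, hClen⟩
  -- the chosen extrema transfer to C
  have hEedge : ∀ (i : ZMod m) y, s(e i, y) ∈ C.edges → s(e i, y) ∈ (Q i).edges := by
    intro i y h
    rw [hCedges] at h
    obtain ⟨k, hk, h'⟩ := List.mem_flatMap.mp h
    rcases List.mem_append.mp h' with hq | hp
    · by_cases hki : ((k : ZMod m)) = i
      · rwa [hki] at hq
      · exfalso
        have h1 : e i ∈ (N.B (k : ZMod m)).support :=
          hQsub _ _ ((Q _).fst_mem_support_of_mem_edges hq)
        rcases H1 i _ (Ne.symm hki) (e i) (hei_mem i) h1 with h' | h'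
        · exact he_na i h'
        · exact he_nb i h'
    · exfalso
      have h1 : e i ∈ (N.P (k : ZMod m)).support := (N.P _).fst_mem_support_of_mem_edges hp
      rcases H2 i _ (e i) (hei_mem i) h1 with h' | h'
      · exact he_na i h'
      · exact he_nb i h'
  have heiC_mem : ∀ i : ZMod m, e i ∈ C.support := by
    intro i
    rw [hCsupp]
    refine List.mem_cons_of_mem _ (List.mem_flatMap.mpr ⟨i.val,
      List.mem_range.mpr (ZMod.val_lt i), List.mem_append.mpr (Or.inl ?_)⟩)
    rw [hvalcast i]
    have hq := hQe i
    rw [(Q i).support_eq_cons] at hq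
    rcases List.mem_cons.mp hq with h | h
    · exact absurd h (he_na i)
    · exact h
  have hext_C : ∀ i : ZMod m, IsHoleExtremum A C (e i) := by
    intro i
    rcases he_ext i with h | h
    · exact Or.inl ⟨heiC_mem i, fun y hy => h.2 y (hQedge i _ (hEedge i y hy))⟩
    · exact Or.inr ⟨heiC_mem i, fun y hy => h.2 y (hQedge i _ (hEedge i y hy))⟩
  have he_inj : ∀ i j : ZMod m, i ≠ j → e i ≠ e j := by
    intro i j hij h
    have hmem : e i ∈ (N.B j).support := by rw [h]; exact hei_mem j
    rcases H1 i j hij (e i) (hei_mem i) hmem with h' | h'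
    · exact he_na i h'
    · exact he_nb i h'
  -- endgame
  obtain ⟨⟨s₁, s₂, hs12, hs1, hs2, hsall⟩, ⟨t₁, t₂, ht12, ht1, ht2, htall⟩⟩ :=
    (hholes _ C hole_C).1
  obtain ⟨x, y, z, hxy, hyz, hxz, hex, hey, hez, hexy, heyz⟩ := (hholes _ C hole_C).2
  have hmem4 : ∀ u, IsHoleExtremum A C u → u = s₁ ∨ u = s₂ ∨ u = t₁ ∨ u = t₂ := by
    intro u hu
    rcases hu with h | h
    · rcases hsall u h with h' | h'
      · exact Or.inl h'
      · exact Or.inr (Or.inl h')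
    · rcases htall u h with h' | h'
      · exact Or.inr (Or.inr (Or.inl h'))
      · exact Or.inr (Or.inr (Or.inr h'))
  have hfour : ∀ u, IsHoleExtremum A C u → ∃ i : ZMod m, u = e i := by
    intro u hu
    by_contra hcon
    push_neg at hcon
    have hd : ∀ r s : ℕ, r < m → s < m → r ≠ s →
        e ((r : ℕ) : ZMod m) ≠ e ((s : ℕ) : ZMod m) :=
      fun r s hr hs hrs => he_inj _ _ (hcastinj r s hr hs hrs)
    have n0 : u ∉ ({e ((0:ℕ) : ZMod m), e ((1:ℕ) : ZMod m), e ((2:ℕ) : ZMod m),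
        e ((3:ℕ) : ZMod m)} : Finset V) := by
      simp only [Finset.mem_insert, Finset.mem_singleton]
      push_neg
      exact ⟨hcon _, hcon _, hcon _, hcon _⟩
    have n1 : e ((0:ℕ) : ZMod m) ∉ ({e ((1:ℕ) : ZMod m), e ((2:ℕ) : ZMod m),
        e ((3:ℕ) : ZMod m)} : Finset V) := by
      simp only [Finset.mem_insert, Finset.mem_singleton]
      push_neg
      exact ⟨hd 0 1 (by omega) (by omega) (by omega), hd 0 2 (by omega) (by omega) (by omega),
        hd 0 3 (by omega) (by omega) (by omega)⟩
    have n2 : e ((1:ℕ) : ZMod m) ∉ ({e ((2:ℕ) : ZMod m), e ((3:ℕ) : ZMod m)} : Finset V) := by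
      simp only [Finset.mem_insert, Finset.mem_singleton]
      push_neg
      exact ⟨hd 1 2 (by omega) (by omega) (by omega), hd 1 3 (by omega) (by omega) (by omega)⟩
    have n3 : e ((2:ℕ) : ZMod m) ∉ ({e ((3:ℕ) : ZMod m)} : Finset V) := by
      simp only [Finset.mem_singleton]
      exact hd 2 3 (by omega) (by omega) (by omega)
    have h5 : ({u, e ((0:ℕ) : ZMod m), e ((1:ℕ) : ZMod m), e ((2:ℕ) : ZMod m),
        e ((3:ℕ) : ZMod m)} : Finset V).card = 5 := by
      rw [Finset.card_insert_of_notMem n0, Finset.card_insert_of_notMem n1,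
        Finset.card_insert_of_notMem n2, Finset.card_insert_of_notMem n3,
        Finset.card_singleton]
    have hsub : ({u, e ((0:ℕ) : ZMod m), e ((1:ℕ) : ZMod m), e ((2:ℕ) : ZMod m),
        e ((3:ℕ) : ZMod m)} : Finset V) ⊆ ({s₁, s₂, t₁, t₂} : Finset V) := by
      intro w hw
      simp only [Finset.mem_insert, Finset.mem_singleton] at hw
      have hw' : IsHoleExtremum A C w := by
        rcases hw with rfl | rfl | rfl | rfl | rfl
        · exact hu
        · exact hext_C _
        · exact hext_C _
        · exact hext_C _
        · exact hext_C _
      rcases hmem4 w hw' with h | h | h | h <;>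
        simp [Finset.mem_insert, Finset.mem_singleton, h]
    have hcard4 : ({s₁, s₂, t₁, t₂} : Finset V).card ≤ 4 := by
      refine le_trans (Finset.card_insert_le _ _) ?_
      refine le_trans (Nat.add_le_add_right (Finset.card_insert_le _ _) 1) ?_
      refine le_trans (Nat.add_le_add_right (Nat.add_le_add_right
        (Finset.card_insert_le _ _) 1) 1) ?_
      simp
    have := Finset.card_le_card hsub
    omega
  obtain ⟨i, rfl⟩ := hfour x hex
  obtain ⟨j, rfl⟩ := hfour y hey
  have hij : i ≠ j := fun h => hxy (by rw [h])
  have hQij := hEedge i (e j) hexy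
  have h1 : e j ∈ (N.B i).support := hQsub i _ ((Q i).snd_mem_support_of_mem_edges hQij)
  rcases H1 j i (Ne.symm hij) (e j) (hei_mem j) h1 with h' | h'
  · exact he_na j h'
  · exact he_nb j h'


end BurlingFormal
end
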